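/- arXiv:1002.2604 — 3 statements merged into one kernel-verified Lean document; each statement's English description precedes it below -/
import Mathlib

section
/- For every z ∈ [0,1], the conditional probability generating function of the portfolio loss given the factors satisfies E[z^X | S] = ∏_{k=0}^N exp(S_k μ_k (Q_k(z) − 1)) almost surely. -/
open MeasureTheory ProbabilityTheory Real Finset

section CRPlusAux

/-- tsum over a finite pi type of a product equals the product of tsums, in ℝ≥0∞,
Fin version. -/
lemma crplus_tsum_prod_fin : ∀ (m : ℕ) (f : Fin m → ℕ → ENNReal),
    ∏ i, ∑' n, f i n = ∑' d : Fin m → ℕ, ∏ i, f i (d i) := by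
  intro m
  induction m with
  | zero =>
    intro f
    simp only [Finset.univ_eq_empty, Finset.prod_empty]
    rw [tsum_eq_single (fun i => i.elim0)]
    · intro d hd; exact absurd (funext fun i => i.elim0) hd
  | succ m ih =>
    intro f
    have he := (Fin.consEquiv (fun _ : Fin (m+1) => ℕ)).tsum_eq
      (fun d : Fin (m+1) → ℕ => ∏ i, f i (d i))
    rw [← he]
    have : ∀ (q : ℕ × (Fin m → ℕ)),
        (∏ i, f i ((Fin.consEquiv (fun _ : Fin (m+1) => ℕ)) q i))
          = f 0 q.1 * ∏ i : Fin m, f i.succ (q.2 i) := by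
      intro q
      rw [Fin.prod_univ_succ]
      simp [Fin.consEquiv]
    rw [tsum_congr this,
      ENNReal.tsum_prod (f := fun n (d : Fin m → ℕ) => f 0 n * ∏ i, f i.succ (d i)),
      Fin.prod_univ_succ, ih (fun i n => f i.succ n)]
    rw [← ENNReal.tsum_mul_right]
    exact tsum_congr fun n => by rw [ENNReal.tsum_mul_left]

/-- tsum over a finite pi type of a product equals the product of tsums, in ℝ≥0∞. -/
lemma crplus_tsum_prod_pi {𝒜 : Type} [Fintype 𝒜] (f : 𝒜 → ℕ → ENNReal) :
    ∏ A, ∑' n, f A n = ∑' d : 𝒜 → ℕ, ∏ A, f A (d A) := by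
  classical
  obtain e := Fintype.equivFin 𝒜
  have h := crplus_tsum_prod_fin (Fintype.card 𝒜) (fun i n => f (e.symm i) n)
  have h1 : ∏ A, ∑' n, f A n = ∏ i, ∑' n, f (e.symm i) n :=
    (Equiv.prod_comp e.symm (fun A => ∑' n, f A n)).symm
  have h2 : ∑' d : Fin (Fintype.card 𝒜) → ℕ, ∏ i, f (e.symm i) (d i)
      = ∑' d : 𝒜 → ℕ, ∏ A, f A (d A) := by
    have := (Equiv.arrowCongr e.symm (Equiv.refl ℕ)).tsum_eq
      (fun d : 𝒜 → ℕ => ∏ A, f A (d A))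
    rw [← this]
    refine tsum_congr fun d => ?_
    have := Equiv.prod_comp e.symm (fun A => f A ((Equiv.arrowCongr e.symm (Equiv.refl ℕ)) d A))
    rw [← this]
    exact Finset.prod_congr rfl fun i _ => by simp [Equiv.arrowCongr]
  rw [h1, h, h2]

/-- Probability generating function of the Poisson distribution. -/
lemma crplus_poisson_pgf (r : NNReal) {c : ℝ} (hc : 0 ≤ c) :
    ∑' n, ENNReal.ofReal (c ^ n * poissonPMFReal r n)
      = ENNReal.ofReal (Real.exp (r * (c - 1))) := by
  have hterm : ∀ n : ℕ, c ^ n * poissonPMFReal r n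
      = Real.exp (-(r : ℝ)) * (((r : ℝ) * c) ^ n / (n.factorial : ℝ)) := by
    intro n
    unfold poissonPMFReal
    rw [mul_pow]
    ring
  have hsum : Summable (fun n : ℕ => Real.exp (-(r : ℝ)) * (((r : ℝ) * c) ^ n / (n.factorial : ℝ))) :=
    (Real.summable_pow_div_factorial ((r : ℝ) * c)).mul_left _
  have htsum : ∑' n : ℕ, Real.exp (-(r : ℝ)) * (((r : ℝ) * c) ^ n / (n.factorial : ℝ))
      = Real.exp ((r : ℝ) * (c - 1)) := by
    rw [tsum_mul_left]
    have : ∑' n : ℕ, ((r : ℝ) * c) ^ n / (n.factorial : ℝ) = Real.exp ((r : ℝ) * c) := by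
      rw [Real.exp_eq_exp_ℝ, NormedSpace.exp_eq_tsum_div]
    rw [this, ← Real.exp_add]
    ring_nf
  have hnn : ∀ n : ℕ, 0 ≤ c ^ n * poissonPMFReal r n :=
    fun n => mul_nonneg (pow_nonneg hc n) poissonPMFReal_nonneg
  calc ∑' n, ENNReal.ofReal (c ^ n * poissonPMFReal r n)
      = ENNReal.ofReal (∑' n, c ^ n * poissonPMFReal r n) := by
        rw [ENNReal.ofReal_tsum_of_nonneg hnn]
        exact (hsum.congr fun n => (hterm n).symm)
    _ = ENNReal.ofReal (Real.exp (r * (c - 1))) := by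
        rw [tsum_congr hterm, htsum]

/-- Measurability of `x ↦ poissonPMFReal x.toNNReal n`. -/
lemma crplus_measurable_poisson (n : ℕ) :
    Measurable (fun x : ℝ => poissonPMFReal x.toNNReal n) := by
  unfold poissonPMFReal
  have h : Measurable (fun x : ℝ => ((x.toNNReal : ℝ))) :=
    continuous_real_toNNReal.measurable.coe_nnreal_real
  exact ((Real.measurable_exp.comp h.neg).mul (h.pow_const n)).div_const _

/-- Expectation of a product of independent, `[0,1]`-valued random variables. -/
lemma crplus_integral_prod {ι : Type*} {Ω : Type} [MeasurableSpace Ω]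
    {P : Measure Ω} [IsProbabilityMeasure P] {Y : ι → Ω → ℝ}
    (hind : iIndepFun Y P)
    (hmeas : ∀ j, Measurable (Y j)) (h0 : ∀ j ω, 0 ≤ Y j ω) (h1 : ∀ j ω, Y j ω ≤ 1)
    (J : Finset ι) :
    ∫ ω, ∏ j ∈ J, Y j ω ∂P = ∏ j ∈ J, ∫ ω, Y j ω ∂P := by
  classical
  have hint : ∀ (K : Finset ι), Integrable (fun ω => ∏ j ∈ K, Y j ω) P := by
    intro K
    refine Integrable.mono' (integrable_const (1 : ℝ))
      (Finset.measurable_prod K fun j _ => hmeas j).aestronglyMeasurable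
      (Filter.Eventually.of_forall fun ω => ?_)
    rw [Real.norm_eq_abs, abs_of_nonneg (Finset.prod_nonneg fun j _ => h0 j ω)]
    exact Finset.prod_le_one (fun j _ => h0 j ω) (fun j _ => h1 j ω)
  induction J using Finset.induction_on with
  | empty => simp
  | insert j J' hj ih =>
    have hIndep : IndepFun (∏ i ∈ J', Y i) (Y j) P :=
      hind.indepFun_finset_prod_of_notMem hmeas hj
    have hprodapp : (fun ω => ∏ i ∈ J', Y i ω) = ∏ i ∈ J', Y i := by
      funext ω; rw [Finset.prod_apply]
    rw [Finset.prod_insert hj]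
    have : ∀ ω, ∏ i ∈ insert j J', Y i ω = (∏ i ∈ J', Y i ω) * Y j ω := by
      intro ω; rw [Finset.prod_insert hj]; ring
    rw [integral_congr_ae (Filter.Eventually.of_forall this)]
    have hYj : Integrable (Y j) P := by
      refine Integrable.mono' (integrable_const (1 : ℝ)) (hmeas j).aestronglyMeasurable
        (Filter.Eventually.of_forall fun ω => ?_)
      rw [Real.norm_eq_abs, abs_of_nonneg (h0 j ω)]; exact h1 j ω
    have hmul := hIndep.integral_mul_eq_mul_integral (by rw [← hprodapp]; exact (hint J').aestronglyMeasurable)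
      hYj.aestronglyMeasurable
    have : ((∏ i ∈ J', Y i) * Y j) = fun ω => (∏ i ∈ J', Y i ω) * Y j ω := by
      funext ω; rw [Pi.mul_apply, Finset.prod_apply]
    rw [this] at hmul
    rw [show (∫ (a : Ω), (∏ i ∈ J', Y i a) * Y j a ∂P) = integral P fun ω => (∏ i ∈ J', Y i ω) * Y j ω from rfl,
      hmul, ← hprodapp, ih, mul_comm]

lemma crplus_gammaMeasure_neg (a r : ℝ) : gammaMeasure a r {x : ℝ | x < 0} = 0 := by
  have hms : MeasurableSet {x : ℝ | x < 0} := measurableSet_lt measurable_id measurable_const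
  rw [gammaMeasure, withDensity_apply _ hms]
  rw [setLIntegral_congr_fun hms
    (fun x (hx : x < 0) => gammaPDF_of_neg hx)]
  simp

lemma crplus_measurable_sumrange {Ω : Type} [MeasurableSpace Ω] {D : Ω → ℕ}
    {E : ℕ → Ω → ℕ} (hD : Measurable D) (hE : ∀ i, Measurable (E i)) :
    Measurable (fun ω => ∑ i ∈ Finset.range (D ω), E i ω) := by
  apply measurable_to_countable'
  intro n
  have : (fun ω => ∑ i ∈ Finset.range (D ω), E i ω) ⁻¹' {n}
      = ⋃ m, (D ⁻¹' {m}) ∩ ((fun ω => ∑ i ∈ Finset.range m, E i ω) ⁻¹' {n}) := by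
    ext ω
    simp only [Set.mem_preimage, Set.mem_singleton_iff, Set.mem_iUnion, Set.mem_inter_iff]
    constructor
    · intro h; exact ⟨D ω, rfl, h⟩
    · rintro ⟨m, hm, h⟩; rw [hm]; exact h
  rw [this]
  exact MeasurableSet.iUnion fun m => (hD (measurableSet_singleton m)).inter
    ((Finset.measurable_sum _ fun i _ => hE i) (measurableSet_singleton n))

end CRPlusAux


/-- The CreditRisk+ model with random severities: `P` is a probability measure; the
economic factors `S 0, ..., S N` are independent, `S 0 = 1` is constant and `S (k+1)` is
Gamma distributed with shape `shape k` and rate `rate k` (scale `1 / rate k`);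
conditionally on `S` the approximate default indicators `(D A)_A` are independent
Poisson variables with intensities `p_A^S = p A * ∑ k, w A k * S k` (this is expressed by
the factorization of the joint conditional pmf); for each obligor `A` the exposures
`E A i`, `i = 0, 1, 2, ...` are i.i.d. copies of `ℰ_A := E A 0`, and the whole family of
exposures is mutually independent and independent of `(D, S)`. -/
def IsCRModel {Ω : Type} [MeasurableSpace Ω] (P : Measure Ω) {N : ℕ} {𝒜 : Type}
    [Fintype 𝒜] (S : Fin (N + 1) → Ω → ℝ) (D : 𝒜 → Ω → ℕ) (E : 𝒜 → ℕ → Ω → ℕ)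
    (p : 𝒜 → ℝ) (w : 𝒜 → Fin (N + 1) → ℝ) (shape rate : Fin N → ℝ) : Prop :=
  IsProbabilityMeasure P ∧
  (∀ k, Measurable (S k)) ∧ (∀ A, Measurable (D A)) ∧ (∀ A i, Measurable (E A i)) ∧
  (∀ ω, S 0 ω = 1) ∧
  iIndepFun S P ∧
  (∀ k : Fin N, P.map (S k.succ) = gammaMeasure (shape k) (rate k)) ∧
  (∀ (d : 𝒜 → ℕ) (B : Set (Fin (N + 1) → ℝ)), MeasurableSet B →
    P ({ω | ∀ A, D A ω = d A} ∩ {ω | (fun k => S k ω) ∈ B})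
      = ∫⁻ ω in {ω | (fun k => S k ω) ∈ B},
          ∏ A, ENNReal.ofReal
            (poissonPMFReal (p A * ∑ k, w A k * S k ω).toNNReal (d A)) ∂P) ∧
  (∀ A i, P.map (E A i) = P.map (E A 0)) ∧
  iIndepFun (β := fun j : (𝒜 × ℕ) ⊕ Unit =>
      Sum.elim (fun _ => ℕ) (fun _ => ((𝒜 → ℕ) × (Fin (N + 1) → ℝ))) j)
    (m := fun j => Sum.rec (fun _ => inferInstanceAs (MeasurableSpace ℕ))
      (fun _ => inferInstanceAs (MeasurableSpace ((𝒜 → ℕ) × (Fin (N + 1) → ℝ)))) j)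
    (fun j => Sum.rec (fun Ai => E Ai.1 Ai.2)
      (fun _ ω => ((fun A => D A ω), (fun k => S k ω))) j) P

/-- The portfolio loss `X = ∑ A, ∑_{i=1}^{D A} ℰ_{A,i}`. -/
def portfolioLoss {Ω : Type} {𝒜 : Type} [Fintype 𝒜]
    (D : 𝒜 → Ω → ℕ) (E : 𝒜 → ℕ → Ω → ℕ) (ω : Ω) : ℕ :=
  ∑ A, ∑ i ∈ Finset.range (D A ω), E A i ω

/-- The probability generating function `z ↦ 𝔼[z^Y]` of an `ℕ`-valued random variable. -/
noncomputable def pgfN {Ω : Type} [MeasurableSpace Ω] (P : Measure Ω) (Y : Ω → ℕ)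
    (z : ℝ) : ℝ :=
  ∫ ω, z ^ Y ω ∂P

/-- The sector default intensity `μ_k = ∑ A, w A k * p A`. -/
def sectorIntensity {𝒜 : Type} [Fintype 𝒜] {N : ℕ} (p : 𝒜 → ℝ)
    (w : 𝒜 → Fin (N + 1) → ℝ) (k : Fin (N + 1)) : ℝ :=
  ∑ A, w A k * p A

/-- The sector polynomial `Q_k(z) = μ_k⁻¹ * ∑ A, w A k * p A * H_A(z)`, where
`H_A` is the pgf of `ℰ_A = E A 0`. -/
noncomputable def sectorPoly {Ω : Type} {𝒜 : Type} [MeasurableSpace Ω] [Fintype 𝒜]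
    {N : ℕ} (P : Measure Ω) (E : 𝒜 → ℕ → Ω → ℕ) (p : 𝒜 → ℝ)
    (w : 𝒜 → Fin (N + 1) → ℝ) (k : Fin (N + 1)) (z : ℝ) : ℝ :=
  (sectorIntensity p w k)⁻¹ * ∑ A, w A k * p A * pgfN P (E A 0) z

/-- The `j`-th unit vector in `ℝ^N`. -/
def unitVec {N : ℕ} (j : Fin N) : Fin N → ℝ := fun k => if k = j then 1 else 0




/-- Conditionally on the factors `S`, the pgf of the portfolio loss is
`𝔼[z ^ X | S] = ∏ k, exp (S k * μ_k * (Q_k z - 1))` a.s., for every `z ∈ [0,1]`. -/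
theorem cond_pgf_given_factors
    {Ω : Type} {𝒜 : Type} [MeasurableSpace Ω] [Fintype 𝒜] {N : ℕ} (hN : 1 ≤ N)
    (P : Measure Ω) (S : Fin (N + 1) → Ω → ℝ) (D : 𝒜 → Ω → ℕ) (E : 𝒜 → ℕ → Ω → ℕ)
    (p : 𝒜 → ℝ) (w : 𝒜 → Fin (N + 1) → ℝ) (α : Fin N → ℝ)
    (hα : ∀ k, 0 < α k) (hp : ∀ A, 0 ≤ p A)
    (hw0 : ∀ A k, 0 ≤ w A k) (hw1 : ∀ A k, w A k ≤ 1)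
    (hwsum : ∀ A, ∑ k, w A k = 1)
    (hM : IsCRModel P S D E p w α α)
    (hμ : ∀ k, 0 < sectorIntensity p w k)
    (z : ℝ) (hz : z ∈ Set.Icc (0 : ℝ) 1) :
    P[(fun ω => z ^ portfolioLoss D E ω) |
        MeasurableSpace.comap (fun ω k => S k ω) inferInstance]
      =ᵐ[P] fun ω => ∏ k : Fin (N + 1),
          Real.exp (S k ω * sectorIntensity p w k * (sectorPoly P E p w k z - 1)) := by
  classical
  obtain ⟨hP, hSm, hDm, hEm, hS0, hSind, hSgamma, hcond, hEid, hind⟩ := hM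
  haveI := hP
  obtain ⟨hz0, hz1⟩ := hz
  -- basic measurability facts
  have hπ : Measurable (fun ω k => S k ω) := measurable_pi_lambda _ hSm
  have hm : MeasurableSpace.comap (fun ω k => S k ω) inferInstance ≤ _ := hπ.comap_le
  haveI : SigmaFinite (P.trim hm) := by infer_instance
  have hpowm : ∀ (Y : Ω → ℕ), Measurable Y → Measurable (fun ω => z ^ Y ω) := fun Y hY =>
    (measurable_from_top (f := fun n : ℕ => z ^ n)).comp hY
  have hXm : Measurable (portfolioLoss D E) := by
    unfold portfolioLoss
    exact Finset.measurable_sum _ fun A _ => crplus_measurable_sumrange (hDm A) (hEm A)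
  have hf_meas : Measurable (fun ω => z ^ portfolioLoss D E ω) := hpowm _ hXm
  have hpow01 : ∀ n : ℕ, 0 ≤ z ^ n ∧ z ^ n ≤ 1 :=
    fun n => ⟨pow_nonneg hz0 n, pow_le_one₀ hz0 hz1⟩
  have hbdd_int : ∀ (Y : Ω → ℝ), Measurable Y → (∀ ω, 0 ≤ Y ω) → (∀ ω, Y ω ≤ 1) →
      Integrable Y P := by
    intro Y hYm hY0 hY1
    refine Integrable.mono' (integrable_const 1) hYm.aestronglyMeasurable
      (Filter.Eventually.of_forall fun ω => ?_)
    rw [Real.norm_eq_abs, abs_of_nonneg (hY0 ω)]; exact hY1 ω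
  have hf_int : Integrable (fun ω => z ^ portfolioLoss D E ω) P :=
    hbdd_int _ hf_meas (fun ω => (hpow01 _).1) (fun ω => (hpow01 _).2)
  -- pgf facts
  have hH0 : ∀ A, 0 ≤ pgfN P (E A 0) z := fun A => integral_nonneg fun ω => (hpow01 _).1
  have hH1 : ∀ A, pgfN P (E A 0) z ≤ 1 := by
    intro A
    have : pgfN P (E A 0) z ≤ ∫ (_ : Ω), (1 : ℝ) ∂P :=
      integral_mono (hbdd_int _ (hpowm _ (hEm A 0)) (fun ω => (hpow01 _).1)
        (fun ω => (hpow01 _).2)) (integrable_const 1) (fun ω => (hpow01 _).2)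
    simpa using this
  have hpow_int_eq : ∀ A i, ∫ ω, z ^ E A i ω ∂P = pgfN P (E A 0) z := by
    intro A i
    have hpm : Measurable (fun n : ℕ => z ^ n) := measurable_from_top
    rw [pgfN, ← integral_map (hEm A i).aemeasurable hpm.aestronglyMeasurable, hEid A i,
      integral_map (hEm A 0).aemeasurable hpm.aestronglyMeasurable]
  -- intensities
  have hLm : ∀ A, Measurable (fun ω => p A * ∑ k, w A k * S k ω) :=
    fun A => (Finset.measurable_sum Finset.univ fun k _ =>
      (hSm k).const_mul (w A k)).const_mul (p A)
  set g' : Ω → ℝ := fun ω => ∏ A, Real.exp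
      (((p A * ∑ k, w A k * S k ω).toNNReal : ℝ) * (pgfN P (E A 0) z - 1)) with hg'def
  have hLcm : ∀ A, Measurable (fun ω => ((p A * ∑ k, w A k * S k ω).toNNReal : ℝ)) := fun A =>
    (continuous_real_toNNReal.measurable.coe_nnreal_real).comp (hLm A)
  have hg'meas : Measurable g' :=
    Finset.measurable_prod _ fun A _ => ((hLcm A).mul_const _).exp
  have hg'0 : ∀ ω, 0 ≤ g' ω := fun ω => Finset.prod_nonneg fun A _ => Real.exp_nonneg _
  have hg'1 : ∀ ω, g' ω ≤ 1 := by
    intro ω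
    refine Finset.prod_le_one (fun A _ => Real.exp_nonneg _) (fun A _ => ?_)
    rw [Real.exp_le_one_iff]
    exact mul_nonpos_of_nonneg_of_nonpos (NNReal.coe_nonneg _) (by linarith [hH1 A])
  have hg'int : Integrable g' P := hbdd_int _ hg'meas hg'0 hg'1
  -- a.e. nonnegativity of the factors
  have hSae : ∀ᵐ ω ∂P, ∀ k, 0 ≤ S k ω := by
    rw [ae_all_iff]
    intro k
    rcases Fin.eq_zero_or_eq_succ k with hk | ⟨j, hk⟩
    · subst hk; filter_upwards with ω; rw [hS0 ω]; norm_num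
    · subst hk
      have h0 : P {ω | S j.succ ω < 0} = 0 := by
        have hlt : MeasurableSet {x : ℝ | x < 0} :=
          measurableSet_lt measurable_id measurable_const
        have he : {ω | S j.succ ω < 0} = (S j.succ) ⁻¹' {x | x < 0} := rfl
        rw [he, ← Measure.map_apply (hSm _) hlt, hSgamma j, crplus_gammaMeasure_neg]
      rw [ae_iff]
      convert h0 using 2
      ext ω; simp [not_le]
  -- pointwise identity between the target function and `g'`
  have hkey : ∀ ω, (∀ k, 0 ≤ S k ω) →
      (∏ k, Real.exp (S k ω * sectorIntensity p w k * (sectorPoly P E p w k z - 1)))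
        = g' ω := by
    intro ω hω
    have h1 : ∀ k, sectorIntensity p w k * (sectorPoly P E p w k z - 1)
        = ∑ A, w A k * p A * (pgfN P (E A 0) z - 1) := by
      intro k
      rw [sectorPoly, mul_sub, mul_one, ← mul_assoc, mul_inv_cancel₀ (hμ k).ne', one_mul,
        sectorIntensity, ← Finset.sum_sub_distrib]
      exact Finset.sum_congr rfl fun A _ => by ring
    have h2 : ∑ k, S k ω * sectorIntensity p w k * (sectorPoly P E p w k z - 1)
        = ∑ A, ((p A * ∑ k, w A k * S k ω).toNNReal : ℝ) * (pgfN P (E A 0) z - 1) := by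
      have e1 : ∀ k, S k ω * sectorIntensity p w k * (sectorPoly P E p w k z - 1)
          = ∑ A, S k ω * (w A k * p A * (pgfN P (E A 0) z - 1)) := by
        intro k; rw [mul_assoc, h1 k, Finset.mul_sum]
      rw [Finset.sum_congr rfl fun k _ => e1 k, Finset.sum_comm]
      refine Finset.sum_congr rfl fun A _ => ?_
      have hnn : 0 ≤ p A * ∑ k, w A k * S k ω :=
        mul_nonneg (hp A) (Finset.sum_nonneg fun k _ => mul_nonneg (hw0 A k) (hω k))
      rw [Real.coe_toNNReal _ hnn]
      calc ∑ k, S k ω * (w A k * p A * (pgfN P (E A 0) z - 1))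
          = (∑ k, w A k * S k ω) * (p A * (pgfN P (E A 0) z - 1)) := by
            rw [Finset.sum_mul]; exact Finset.sum_congr rfl fun k _ => by ring
        _ = (p A * ∑ k, w A k * S k ω) * (pgfN P (E A 0) z - 1) := by ring
    rw [← Real.exp_sum, h2, Real.exp_sum]
  have hgg' : (fun ω => ∏ k, Real.exp
      (S k ω * sectorIntensity p w k * (sectorPoly P E p w k z - 1))) =ᵐ[P] g' := by
    filter_upwards [hSae] with ω hω using hkey ω hω
  have hg_int : Integrable (fun ω => ∏ k, Real.exp
      (S k ω * sectorIntensity p w k * (sectorPoly P E p w k z - 1))) P :=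
    hg'int.congr hgg'.symm
  -- the target function is measurable w.r.t. the comap σ-algebra
  have hGm : Measurable fun v : Fin (N + 1) → ℝ =>
      ∏ k, Real.exp (v k * sectorIntensity p w k * (sectorPoly P E p w k z - 1)) :=
    Finset.measurable_prod _ fun k _ => (((measurable_pi_apply k).mul_const _).mul_const _).exp
  have hgm' : AEStronglyMeasurable[MeasurableSpace.comap (fun ω k => S k ω) inferInstance]
      (fun ω => ∏ k, Real.exp
        (S k ω * sectorIntensity p w k * (sectorPoly P E p w k z - 1))) P := by
    refine StronglyMeasurable.aestronglyMeasurable (Measurable.stronglyMeasurable ?_)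
    exact hGm.comp (Measurable.of_comap_le le_rfl)
  -- main set-lintegral identity
  have main : ∀ B : Set (Fin (N + 1) → ℝ), MeasurableSet B →
      ∫⁻ ω in (fun ω k => S k ω) ⁻¹' B, ENNReal.ofReal (z ^ portfolioLoss D E ω) ∂P
        = ∫⁻ ω in (fun ω k => S k ω) ⁻¹' B, ENNReal.ofReal (g' ω) ∂P := by
    intro B hB
    set s : Set Ω := (fun ω k => S k ω) ⁻¹' B with hsdef
    have hs_meas : MeasurableSet s := hπ hB
    set T : (𝒜 → ℕ) → Set Ω := fun d => {ω | ∀ A, D A ω = d A} with hTdef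
    have hT_meas : ∀ d, MeasurableSet (T d) := by
      intro d
      have he : T d = ⋂ A, (D A) ⁻¹' {d A} := by
        ext ω; simp [hTdef, Set.mem_iInter]
      rw [he]; exact MeasurableSet.iInter fun A => hDm A (measurableSet_singleton _)
    have hUnion : (⋃ d : 𝒜 → ℕ, (T d ∩ s)) = s := by
      ext ω
      simp only [Set.mem_iUnion, Set.mem_inter_iff]
      constructor
      · rintro ⟨d, _, hω⟩; exact hω
      · intro hω; exact ⟨fun A => D A ω, fun A => rfl, hω⟩
    have hdisj : Pairwise (Function.onFun Disjoint fun d => T d ∩ s) := by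
      intro d d' hne
      refine Set.disjoint_left.mpr ?_
      rintro ω ⟨h1, _⟩ ⟨h2, _⟩
      exact hne (funext fun A => (h1 A).symm.trans (h2 A))
    set φ : (𝒜 → ℕ) → Ω → ENNReal := fun d ω =>
      ∏ A, ENNReal.ofReal (poissonPMFReal (p A * ∑ k, w A k * S k ω).toNNReal (d A)) with hφdef
    have hφmeas : ∀ d, Measurable (φ d) := fun d =>
      Finset.measurable_prod _ fun A _ =>
        ((crplus_measurable_poisson (d A)).comp (hLm A)).ennreal_ofReal
    -- per-`d` computation via independence
    have per_d : ∀ d : 𝒜 → ℕ, ∫⁻ ω in T d ∩ s, ENNReal.ofReal (z ^ portfolioLoss D E ω) ∂P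
        = ENNReal.ofReal (∏ A, pgfN P (E A 0) z ^ d A) * P (T d ∩ s) := by
      intro d
      set G : Ω → ℝ := fun ω => ∏ A, ∏ i ∈ Finset.range (d A), z ^ E A i ω with hGdef
      have hGmeas : Measurable G := Finset.measurable_prod _ fun A _ =>
        Finset.measurable_prod _ fun i _ => hpowm _ (hEm A i)
      have hG0 : ∀ ω, 0 ≤ G ω := fun ω => Finset.prod_nonneg fun A _ =>
        Finset.prod_nonneg fun i _ => (hpow01 _).1
      have hG1 : ∀ ω, G ω ≤ 1 := fun ω =>
        Finset.prod_le_one (fun A _ => Finset.prod_nonneg fun i _ => (hpow01 _).1)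
          (fun A _ => Finset.prod_le_one (fun i _ => (hpow01 _).1) (fun i _ => (hpow01 _).2))
      have hGint : Integrable G P := hbdd_int _ hGmeas hG0 hG1
      -- the event as a preimage
      set C : Set ((𝒜 → ℕ) × (Fin (N + 1) → ℝ)) := {q | (∀ A, q.1 A = d A) ∧ q.2 ∈ B}
        with hCdef
      have hC : MeasurableSet C := by
        have h1 : MeasurableSet {q : (𝒜 → ℕ) × (Fin (N + 1) → ℝ) | ∀ A, q.1 A = d A} := by
          have he : {q : (𝒜 → ℕ) × (Fin (N + 1) → ℝ) | ∀ A, q.1 A = d A}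
              = ⋂ A, (fun q : (𝒜 → ℕ) × (Fin (N + 1) → ℝ) => q.1 A) ⁻¹' {d A} := by
            ext q; simp [Set.mem_iInter]
          rw [he]
          exact MeasurableSet.iInter fun A =>
            ((measurable_pi_apply A).comp measurable_fst) (measurableSet_singleton _)
        exact h1.inter (measurable_snd hB)
      set pairD : Ω → (𝒜 → ℕ) × (Fin (N + 1) → ℝ) :=
        fun ω => (fun A => D A ω, fun k => S k ω) with hpairdef
      have hpairm : Measurable pairD := (measurable_pi_lambda _ hDm).prodMk hπ
      have hpair_pre : pairD ⁻¹' C = T d ∩ s := rfl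
      -- the independent real-valued family
      set Y : ((𝒜 × ℕ) ⊕ Unit) → Ω → ℝ := fun j => Sum.rec
        (fun Ai ω => z ^ E Ai.1 Ai.2 ω)
        (fun _ ω => C.indicator (fun _ => (1 : ℝ)) (pairD ω)) j with hYdef
      have hYind : iIndepFun Y P := by
        have hcomp := hind.comp (mγ := fun _ => inferInstance)
          (fun j => Sum.rec
            (motive := fun j => Sum.elim (fun _ => ℕ)
              (fun _ => ((𝒜 → ℕ) × (Fin (N + 1) → ℝ))) j → ℝ)
            (fun _ (n : ℕ) => z ^ n)
            (fun _ (q : (𝒜 → ℕ) × (Fin (N + 1) → ℝ)) => C.indicator (fun _ => (1 : ℝ)) q) j)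
          (by
            rintro (Ai | u)
            · exact measurable_from_top
            · exact measurable_const.indicator hC)
        have hYeq : Y = fun j => (Sum.rec
            (motive := fun j => Sum.elim (fun _ => ℕ)
              (fun _ => ((𝒜 → ℕ) × (Fin (N + 1) → ℝ))) j → ℝ)
            (fun _ (n : ℕ) => z ^ n)
            (fun _ (q : (𝒜 → ℕ) × (Fin (N + 1) → ℝ)) => C.indicator (fun _ => (1 : ℝ)) q) j) ∘
            (Sum.rec (fun Ai => E Ai.1 Ai.2) (fun _ ω => (fun A => D A ω, fun k => S k ω)) j) := by
          funext j; cases j <;> rfl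
        rw [hYeq]; exact hcomp
      have hYmeas : ∀ j, Measurable (Y j) := by
        rintro (⟨A, i⟩ | u)
        · exact hpowm _ (hEm A i)
        · exact (measurable_const.indicator hC).comp hpairm
      have hY0 : ∀ j ω, 0 ≤ Y j ω := by
        rintro (⟨A, i⟩ | u) ω
        · exact (hpow01 _).1
        · show 0 ≤ C.indicator _ _
          rw [Set.indicator_apply]; split <;> norm_num
      have hY1 : ∀ j ω, Y j ω ≤ 1 := by
        rintro (⟨A, i⟩ | u) ω
        · exact (hpow01 _).2
        · show C.indicator _ _ ≤ 1
          rw [Set.indicator_apply]; split <;> norm_num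
      -- the finite index set
      set emb : ((Σ _ : 𝒜, ℕ) ↪ ((𝒜 × ℕ) ⊕ Unit)) :=
        ⟨fun x => Sum.inl (x.1, x.2), by
          rintro ⟨a, i⟩ ⟨b, j⟩ h
          simp only [Sum.inl.injEq, Prod.mk.injEq] at h
          exact Sigma.ext h.1 (heq_of_eq h.2)⟩ with hembdef
      set F : Finset ((𝒜 × ℕ) ⊕ Unit) :=
        (Finset.univ.sigma fun A => Finset.range (d A)).map emb with hFdef
      have hnotmem : Sum.inr () ∉ F := by
        simp [hFdef, Finset.mem_map, hembdef]
      set J : Finset ((𝒜 × ℕ) ⊕ Unit) := insert (Sum.inr ()) F with hJdef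
      have hind_eq : ∀ ω, Y (Sum.inr ()) ω = (T d ∩ s).indicator (fun _ => (1 : ℝ)) ω := by
        intro ω
        show C.indicator _ (pairD ω) = _
        by_cases h : pairD ω ∈ C
        · rw [Set.indicator_of_mem h, Set.indicator_of_mem (hpair_pre ▸ h)]
        · rw [Set.indicator_of_notMem h,
            Set.indicator_of_notMem (hpair_pre ▸ h)]
      have hprodJ : ∀ ω, ∏ j ∈ J, Y j ω
          = (T d ∩ s).indicator (fun _ => (1 : ℝ)) ω * G ω := by
        intro ω
        rw [hJdef, Finset.prod_insert hnotmem, hind_eq ω, hFdef, Finset.prod_map,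
          Finset.prod_sigma]
        rfl
      have hintegral_prod := crplus_integral_prod hYind hYmeas hY0 hY1 J
      have hprod_ints : ∏ j ∈ J, ∫ ω, Y j ω ∂P
          = (P (T d ∩ s)).toReal * ∏ A, pgfN P (E A 0) z ^ d A := by
        rw [hJdef, Finset.prod_insert hnotmem]
        congr 1
        · rw [integral_congr_ae (Filter.Eventually.of_forall hind_eq)]
          exact integral_indicator_one ((hT_meas d).inter hs_meas)
        · rw [hFdef, Finset.prod_map, Finset.prod_sigma]
          refine Finset.prod_congr rfl fun A _ => ?_
          have hYint : ∀ i, (∫ ω, Y (emb ⟨A, i⟩) ω ∂P) = pgfN P (E A 0) z :=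
            fun i => hpow_int_eq A i
          rw [Finset.prod_congr rfl fun i _ => hYint i, Finset.prod_const,
            Finset.card_range]
      have hreal_int : ∫ ω in T d ∩ s, G ω ∂P
          = (P (T d ∩ s)).toReal * ∏ A, pgfN P (E A 0) z ^ d A := by
        rw [← integral_indicator ((hT_meas d).inter hs_meas)]
        have h2 : ∀ ω, (T d ∩ s).indicator G ω = ∏ j ∈ J, Y j ω := by
          intro ω; rw [hprodJ ω]
          by_cases h : ω ∈ T d ∩ s
          · rw [Set.indicator_of_mem h, Set.indicator_of_mem h, one_mul]
          · rw [Set.indicator_of_notMem h, Set.indicator_of_notMem h, zero_mul]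
        rw [integral_congr_ae (Filter.Eventually.of_forall h2), hintegral_prod, hprod_ints]
      calc ∫⁻ ω in T d ∩ s, ENNReal.ofReal (z ^ portfolioLoss D E ω) ∂P
          = ∫⁻ ω in T d ∩ s, ENNReal.ofReal (G ω) ∂P := by
            refine setLIntegral_congr_fun ((hT_meas d).inter hs_meas)
              (fun ω hω => ?_)
            congr 1
            rw [portfolioLoss,
              show (∑ A, ∑ i ∈ Finset.range (D A ω), E A i ω)
                  = ∑ A, ∑ i ∈ Finset.range (d A), E A i ω from
                Finset.sum_congr rfl fun A _ => by rw [hω.1 A],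
              ← Finset.prod_pow_eq_pow_sum]
            exact Finset.prod_congr rfl fun A _ => (Finset.prod_pow_eq_pow_sum _ _ _).symm
        _ = ENNReal.ofReal (∫ ω in T d ∩ s, G ω ∂P) :=
            (ofReal_integral_eq_lintegral_ofReal hGint.integrableOn
              (Filter.Eventually.of_forall fun ω => hG0 ω)).symm
        _ = ENNReal.ofReal (∏ A, pgfN P (E A 0) z ^ d A) * P (T d ∩ s) := by
            rw [hreal_int, ENNReal.ofReal_mul ENNReal.toReal_nonneg,
              ENNReal.ofReal_toReal (measure_ne_top P _), mul_comm]
    have hcond' : ∀ d, P (T d ∩ s) = ∫⁻ ω in s, φ d ω ∂P := fun d => hcond d B hB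
    calc ∫⁻ ω in s, ENNReal.ofReal (z ^ portfolioLoss D E ω) ∂P
        = ∑' d : 𝒜 → ℕ, ∫⁻ ω in T d ∩ s, ENNReal.ofReal (z ^ portfolioLoss D E ω) ∂P := by
          conv_lhs => rw [← hUnion]
          exact lintegral_iUnion (fun d => (hT_meas d).inter hs_meas) hdisj _
      _ = ∑' d : 𝒜 → ℕ, ENNReal.ofReal (∏ A, pgfN P (E A 0) z ^ d A) * ∫⁻ ω in s, φ d ω ∂P :=
          tsum_congr fun d => by rw [per_d d, hcond' d]
      _ = ∑' d : 𝒜 → ℕ, ∫⁻ ω in s, ENNReal.ofReal (∏ A, pgfN P (E A 0) z ^ d A) * φ d ω ∂P :=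
          tsum_congr fun d => (lintegral_const_mul' _ _ ENNReal.ofReal_ne_top).symm
      _ = ∫⁻ ω in s, ∑' d : 𝒜 → ℕ, ENNReal.ofReal (∏ A, pgfN P (E A 0) z ^ d A) * φ d ω ∂P :=
          (lintegral_tsum fun d => ((hφmeas d).const_mul _).aemeasurable).symm
      _ = ∫⁻ ω in s, ENNReal.ofReal (g' ω) ∂P := by
          refine lintegral_congr fun ω => ?_
          rw [hg'def]
          calc ∑' d : 𝒜 → ℕ, ENNReal.ofReal (∏ A, pgfN P (E A 0) z ^ d A) * φ d ω
              = ∑' d : 𝒜 → ℕ, ∏ A, ENNReal.ofReal (pgfN P (E A 0) z ^ d A *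
                  poissonPMFReal (p A * ∑ k, w A k * S k ω).toNNReal (d A)) := by
                refine tsum_congr fun d => ?_
                rw [hφdef, ENNReal.ofReal_prod_of_nonneg
                  (fun A _ => pow_nonneg (hH0 A) _), ← Finset.prod_mul_distrib]
                exact Finset.prod_congr rfl fun A _ =>
                  (ENNReal.ofReal_mul (pow_nonneg (hH0 A) _)).symm
            _ = ∏ A, ∑' n : ℕ, ENNReal.ofReal (pgfN P (E A 0) z ^ n *
                  poissonPMFReal (p A * ∑ k, w A k * S k ω).toNNReal n) :=
                (crplus_tsum_prod_pi (fun A n => ENNReal.ofReal (pgfN P (E A 0) z ^ n *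
                  poissonPMFReal (p A * ∑ k, w A k * S k ω).toNNReal n))).symm
            _ = ∏ A, ENNReal.ofReal (Real.exp
                  (((p A * ∑ k, w A k * S k ω).toNNReal : ℝ) * (pgfN P (E A 0) z - 1))) :=
                Finset.prod_congr rfl fun A _ =>
                  crplus_poisson_pgf (p A * ∑ k, w A k * S k ω).toNNReal (hH0 A)
            _ = ENNReal.ofReal (∏ A, Real.exp
                  (((p A * ∑ k, w A k * S k ω).toNNReal : ℝ) * (pgfN P (E A 0) z - 1))) :=
                (ENNReal.ofReal_prod_of_nonneg fun A _ => Real.exp_nonneg _).symm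
  -- real set-integral identity on the comap σ-algebra
  have hreal : ∀ t : Set Ω,
      MeasurableSet[MeasurableSpace.comap (fun ω k => S k ω) inferInstance] t →
      ∫ ω in t, (∏ k, Real.exp
          (S k ω * sectorIntensity p w k * (sectorPoly P E p w k z - 1))) ∂P
        = ∫ ω in t, z ^ portfolioLoss D E ω ∂P := by
    rintro t ⟨B, hB, rfl⟩
    have hs_meas : MeasurableSet ((fun ω k => S k ω) ⁻¹' B) := hπ hB
    have e1 : ∫ ω in (fun ω k => S k ω) ⁻¹' B, (∏ k, Real.exp
        (S k ω * sectorIntensity p w k * (sectorPoly P E p w k z - 1))) ∂P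
        = ∫ ω in (fun ω k => S k ω) ⁻¹' B, g' ω ∂P :=
      integral_congr_ae (ae_restrict_of_ae hgg')
    have e2 : ∫ ω in (fun ω k => S k ω) ⁻¹' B, g' ω ∂P
        = (∫⁻ ω in (fun ω k => S k ω) ⁻¹' B, ENNReal.ofReal (g' ω) ∂P).toReal :=
      integral_eq_lintegral_of_nonneg_ae (Filter.Eventually.of_forall hg'0)
        hg'meas.aestronglyMeasurable.restrict
    have e3 : ∫ ω in (fun ω k => S k ω) ⁻¹' B, z ^ portfolioLoss D E ω ∂P
        = (∫⁻ ω in (fun ω k => S k ω) ⁻¹' B,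
            ENNReal.ofReal (z ^ portfolioLoss D E ω) ∂P).toReal :=
      integral_eq_lintegral_of_nonneg_ae (Filter.Eventually.of_forall fun ω => (hpow01 _).1)
        hf_meas.aestronglyMeasurable.restrict
    rw [e1, e2, e3, main B hB]
  exact (ae_eq_condExp_of_forall_setIntegral_eq hm hf_int
    (fun t _ _ => hg_int.integrableOn) (fun t ht _ => hreal t ht) hgm').symm
end

section
/- Let A be an obligor and z ∈ [0,1]. Then E[D_A · z^X] = E[p_A^S · z^X] · H_A(z). -/
open MeasureTheory ProbabilityTheory Real Finset

open scoped ENNReal NNReal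

lemma iIndepFun_lintegral_prod {Ω ι : Type*} [MeasurableSpace Ω]
    {P : Measure Ω} [IsProbabilityMeasure P] {β : ι → Type*}
    (m : ∀ i, MeasurableSpace (β i)) (f : ∀ i, Ω → β i)
    (hindep : iIndepFun (m := m) f P) (hmeas : ∀ i, Measurable (f i))
    (G : ∀ i, β i → ℝ≥0∞) (hG : ∀ i, Measurable (G i)) (t : Finset ι) :
    ∫⁻ ω, ∏ j ∈ t, G j (f j ω) ∂P = ∏ j ∈ t, ∫⁻ ω, G j (f j ω) ∂P := by
  classical
  refine Finset.induction_on t (by simp) ?_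
  intro j s hj ih
  simp_rw [Finset.prod_insert hj]
  rw [← ih]
  have h := hindep.indepFun_finset {j} s (Finset.disjoint_singleton_left.mpr hj) hmeas
  have hφ : Measurable (fun v : ∀ i : ({j} : Finset ι), β i =>
      G j (v ⟨j, Finset.mem_singleton_self j⟩)) := (hG j).comp (measurable_pi_apply _)
  have hψ : Measurable (fun v : ∀ i : (s : Finset ι), β i =>
      ∏ i ∈ s.attach, G i (v i)) :=
    Finset.measurable_prod _ (fun i _ => (hG i).comp (measurable_pi_apply _))
  have hIndep := h.comp hφ hψ
  have heq : (fun v : ∀ i : (s : Finset ι), β i => ∏ i ∈ s.attach, G i (v i)) ∘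
      (fun a (i : (s : Finset ι)) => f i a) = fun ω => ∏ i ∈ s, G i (f i ω) := by
    funext ω
    simp only [Function.comp_apply]
    rw [← Finset.prod_attach s (fun i => G i (f i ω))]
  rw [heq] at hIndep
  have := lintegral_mul_eq_lintegral_mul_lintegral_of_indepFun
    (μ := P) ((hG j).comp (hmeas j))
    (Finset.measurable_prod _ (fun i _ => (hG i).comp (hmeas i))) hIndep
  simpa using this

noncomputable def crPhi {𝒜 : Type} [Fintype 𝒜] {N : ℕ} (p : 𝒜 → ℝ) (w : 𝒜 → Fin (N + 1) → ℝ)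
    (d : 𝒜 → ℕ) (s : Fin (N + 1) → ℝ) : ℝ≥0∞ :=
  ∏ B, ENNReal.ofReal (poissonPMFReal (p B * ∑ k, w B k * s k).toNNReal (d B))

lemma measurable_crPhi {𝒜 : Type} [Fintype 𝒜] {N : ℕ} (p : 𝒜 → ℝ) (w : 𝒜 → Fin (N + 1) → ℝ)
    (d : 𝒜 → ℕ) : Measurable (crPhi p w d) := by
  apply Finset.measurable_prod
  intro B _
  apply ENNReal.measurable_ofReal.comp
  have h1 : Measurable (fun s : Fin (N + 1) → ℝ => (p B * ∑ k, w B k * s k).toNNReal) := by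
    apply Measurable.real_toNNReal
    apply Measurable.const_mul
    exact Finset.measurable_sum _ (fun k _ => (measurable_pi_apply k).const_mul _)
  have h2 : Measurable (fun r : ℝ≥0 => poissonPMFReal r (d B)) := by
    unfold poissonPMFReal
    fun_prop
  exact h2.comp h1

lemma cr_cond_measure {Ω : Type} {𝒜 : Type} [MeasurableSpace Ω] [Fintype 𝒜] {N : ℕ}
    {P : Measure Ω} {S : Fin (N + 1) → Ω → ℝ} {D : 𝒜 → Ω → ℕ}
    {p : 𝒜 → ℝ} {w : 𝒜 → Fin (N + 1) → ℝ}
    (hS : ∀ k, Measurable (S k)) (hD : ∀ A, Measurable (D A))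
    (hcond : ∀ (d : 𝒜 → ℕ) (B : Set (Fin (N + 1) → ℝ)), MeasurableSet B →
      P ({ω | ∀ A, D A ω = d A} ∩ {ω | (fun k => S k ω) ∈ B})
        = ∫⁻ ω in {ω | (fun k => S k ω) ∈ B},
            ∏ A, ENNReal.ofReal
              (poissonPMFReal (p A * ∑ k, w A k * S k ω).toNNReal (d A)) ∂P)
    (d : 𝒜 → ℕ) :
    Measure.map (fun ω k => S k ω) (P.restrict {ω | (fun A => D A ω) = d})
      = (P.map (fun ω k => S k ω)).withDensity (crPhi p w d) := by
  have hSvec : Measurable (fun ω k => S k ω) := measurable_pi_lambda _ hS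
  have hDset : MeasurableSet {ω | (fun A => D A ω) = d} := by
    have : {ω | (fun A => D A ω) = d} = ⋂ A, (D A) ⁻¹' {d A} := by
      ext ω; simp [funext_iff, Set.mem_iInter]
    rw [this]
    exact MeasurableSet.iInter fun A => (hD A) (measurableSet_singleton _)
  ext B hB
  rw [Measure.map_apply hSvec hB, Measure.restrict_apply (hSvec hB),
    withDensity_apply _ hB, setLIntegral_map hB (measurable_crPhi p w d) hSvec]
  have hset : {ω | ∀ A, D A ω = d A} = {ω | (fun A => D A ω) = d} := by
    ext ω; simp [funext_iff]
  rw [Set.inter_comm, ← hset]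
  exact hcond d B hB

lemma cr_indep_factor {Ω : Type} {𝒜 : Type} [MeasurableSpace Ω] [Fintype 𝒜] {N : ℕ}
    {P : Measure Ω} [IsProbabilityMeasure P]
    {S : Fin (N + 1) → Ω → ℝ} {D : 𝒜 → Ω → ℕ} {E : 𝒜 → ℕ → Ω → ℕ}
    (hS : ∀ k, Measurable (S k)) (hD : ∀ A, Measurable (D A))
    (hE : ∀ A i, Measurable (E A i))
    (hid : ∀ A i, P.map (E A i) = P.map (E A 0))
    (hindep : iIndepFun (β := fun j : (𝒜 × ℕ) ⊕ Unit =>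
        Sum.elim (fun _ => ℕ) (fun _ => ((𝒜 → ℕ) × (Fin (N + 1) → ℝ))) j)
      (m := fun j => Sum.rec (fun _ => inferInstanceAs (MeasurableSpace ℕ))
        (fun _ => inferInstanceAs (MeasurableSpace ((𝒜 → ℕ) × (Fin (N + 1) → ℝ)))) j)
      (fun j => Sum.rec (fun Ai => E Ai.1 Ai.2)
        (fun _ ω => ((fun A => D A ω), (fun k => S k ω))) j) P)
    (ψ : (Fin (N + 1) → ℝ) → ℝ≥0∞) (hψ : Measurable ψ)
    (h : 𝒜 → ℕ → ℝ≥0∞) (hh : ∀ B, Measurable (h B))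
    (d : 𝒜 → ℕ) :
    ∫⁻ ω, ({ω' | (fun A => D A ω') = d}.indicator (fun ω' => ψ (fun k => S k ω')) ω)
        * ∏ B, ∏ i ∈ Finset.range (d B), h B (E B i ω) ∂P
      = (∫⁻ ω, ({ω' | (fun A => D A ω') = d}.indicator
            (fun ω' => ψ (fun k => S k ω')) ω) ∂P)
        * ∏ B, (∫⁻ ω, h B (E B 0 ω) ∂P) ^ (d B) := by
  classical
  set ι := (𝒜 × ℕ) ⊕ Unit
  set β : ι → Type :=
    fun j => Sum.elim (fun _ => ℕ) (fun _ => ((𝒜 → ℕ) × (Fin (N + 1) → ℝ))) j with hβ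
  set mβ : ∀ j : (𝒜 × ℕ) ⊕ Unit,
      MeasurableSpace (Sum.elim (fun _ => ℕ) (fun _ => ((𝒜 → ℕ) × (Fin (N + 1) → ℝ))) j) :=
    fun j => Sum.rec (fun _ => inferInstanceAs (MeasurableSpace ℕ))
      (fun _ => inferInstanceAs (MeasurableSpace ((𝒜 → ℕ) × (Fin (N + 1) → ℝ)))) j with hmβ
  set f : ∀ j : ι, Ω → β j :=
    fun j => Sum.rec (fun Ai => E Ai.1 Ai.2)
      (fun _ ω => ((fun A => D A ω), (fun k => S k ω))) j with hf
  set G : ∀ j : ι, β j → ℝ≥0∞ :=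
    fun j => Sum.rec (fun Ai n => h Ai.1 n)
      (fun _ q => {q' : (𝒜 → ℕ) × (Fin (N + 1) → ℝ) | q'.1 = d}.indicator
        (fun q' => ψ q'.2) q) j with hG
  have hmeas : ∀ j : ι, @Measurable _ _ _ (mβ j) (f j) := by
    rintro (⟨B, i⟩ | ⟨⟩)
    · exact hE B i
    · exact (measurable_pi_lambda _ hD).prodMk (measurable_pi_lambda _ hS)
  have hGmeas : ∀ j : ι, @Measurable _ _ (mβ j) _ (G j) := by
    rintro (⟨B, i⟩ | ⟨⟩)
    · exact hh B
    · exact (hψ.comp measurable_snd).indicator (measurable_fst (measurableSet_singleton d))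
  set T : Finset (𝒜 × ℕ) :=
    Finset.univ.biUnion (fun B => (Finset.range (d B)).image fun i => (B, i)) with hT
  have hdisj : ((Finset.univ : Finset 𝒜) : Set 𝒜).PairwiseDisjoint
      (fun B => (Finset.range (d B)).image fun i => (B, i)) := by
    intro B _ B' _ hBB'
    simp only [Finset.disjoint_left, Finset.mem_image, Finset.mem_range]
    rintro ⟨x, y⟩ ⟨i, -, hi⟩ ⟨i', -, hi'⟩
    injection hi with h1 h2
    injection hi' with h3 h4
    exact hBB' (h1.trans h3.symm)
  have hTprod : ∀ (g : 𝒜 × ℕ → ℝ≥0∞),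
      ∏ q ∈ T, g q = ∏ B, ∏ i ∈ Finset.range (d B), g (B, i) := by
    intro g
    rw [hT, Finset.prod_biUnion hdisj]
    refine Finset.prod_congr rfl fun B _ => ?_
    refine Finset.prod_image ?_
    intro i _ i' _ hii'
    injection hii'
  set J : Finset ι := insert (Sum.inr ()) (T.map ⟨Sum.inl, Sum.inl_injective⟩) with hJ
  have hnotmem : (Sum.inr () : ι) ∉ T.map ⟨Sum.inl, Sum.inl_injective⟩ := by simp
  have key := iIndepFun_lintegral_prod mβ f hindep hmeas G hGmeas J
  rw [hJ] at key
  simp only [Finset.prod_insert hnotmem, Finset.prod_map, Function.Embedding.coeFn_mk] at key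
  have hind : ∀ ω, G (Sum.inr ()) (f (Sum.inr ()) ω)
      = {ω' | (fun A => D A ω') = d}.indicator (fun ω' => ψ (fun k => S k ω')) ω := by
    intro ω
    simp only [hf, hG, Set.indicator_apply, Set.mem_setOf_eq]
  have hEintegral : ∀ B i, ∫⁻ ω, h B (E B i ω) ∂P = ∫⁻ ω, h B (E B 0 ω) ∂P := by
    intro B i
    rw [← lintegral_map (hh B) (hE B i), ← lintegral_map (hh B) (hE B 0), hid B i]
  calc ∫⁻ ω, ({ω' | (fun A => D A ω') = d}.indicator (fun ω' => ψ (fun k => S k ω')) ω)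
        * ∏ B, ∏ i ∈ Finset.range (d B), h B (E B i ω) ∂P
      = ∫⁻ ω, G (Sum.inr ()) (f (Sum.inr ()) ω)
          * ∏ q ∈ T, G (Sum.inl q) (f (Sum.inl q) ω) ∂P := by
        refine lintegral_congr fun ω => ?_
        rw [hind ω, hTprod (fun q => G (Sum.inl q) (f (Sum.inl q) ω))]
    _ = (∫⁻ ω, G (Sum.inr ()) (f (Sum.inr ()) ω) ∂P)
        * ∏ q ∈ T, ∫⁻ ω, G (Sum.inl q) (f (Sum.inl q) ω) ∂P := key
    _ = (∫⁻ ω, ({ω' | (fun A => D A ω') = d}.indicator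
            (fun ω' => ψ (fun k => S k ω')) ω) ∂P)
        * ∏ B, (∫⁻ ω, h B (E B 0 ω) ∂P) ^ (d B) := by
        rw [lintegral_congr hind, hTprod (fun q => ∫⁻ ω, G (Sum.inl q) (f (Sum.inl q) ω) ∂P)]
        congr 1
        refine Finset.prod_congr rfl fun B _ => ?_
        rw [Finset.prod_congr rfl fun i _ => hEintegral B i, Finset.prod_const,
          Finset.card_range]

lemma cr_key {Ω : Type} {𝒜 : Type} [MeasurableSpace Ω] [Fintype 𝒜] {N : ℕ}
    {P : Measure Ω} [IsProbabilityMeasure P]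
    {S : Fin (N + 1) → Ω → ℝ} {D : 𝒜 → Ω → ℕ} {E : 𝒜 → ℕ → Ω → ℕ}
    {p : 𝒜 → ℝ} {w : 𝒜 → Fin (N + 1) → ℝ}
    (hS : ∀ k, Measurable (S k)) (hD : ∀ A, Measurable (D A))
    (hE : ∀ A i, Measurable (E A i))
    (hid : ∀ A i, P.map (E A i) = P.map (E A 0))
    (hindep : iIndepFun (β := fun j : (𝒜 × ℕ) ⊕ Unit =>
        Sum.elim (fun _ => ℕ) (fun _ => ((𝒜 → ℕ) × (Fin (N + 1) → ℝ))) j)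
      (m := fun j => Sum.rec (fun _ => inferInstanceAs (MeasurableSpace ℕ))
        (fun _ => inferInstanceAs (MeasurableSpace ((𝒜 → ℕ) × (Fin (N + 1) → ℝ)))) j)
      (fun j => Sum.rec (fun Ai => E Ai.1 Ai.2)
        (fun _ ω => ((fun A => D A ω), (fun k => S k ω))) j) P)
    (hcond : ∀ (d : 𝒜 → ℕ) (B : Set (Fin (N + 1) → ℝ)), MeasurableSet B →
      P ({ω | ∀ A, D A ω = d A} ∩ {ω | (fun k => S k ω) ∈ B})
        = ∫⁻ ω in {ω | (fun k => S k ω) ∈ B},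
            ∏ A, ENNReal.ofReal
              (poissonPMFReal (p A * ∑ k, w A k * S k ω).toNNReal (d A)) ∂P)
    (ψ : (Fin (N + 1) → ℝ) → ℝ≥0∞) (hψ : Measurable ψ)
    (ξ : (𝒜 → ℕ) → ℝ≥0∞) (hξ : ∀ d, ξ d ≠ ⊤) (z : ℝ) :
    ∫⁻ ω, ξ (fun A => D A ω) * ψ (fun k => S k ω)
        * ∏ B, ∏ i ∈ Finset.range (D B ω), ENNReal.ofReal (z ^ E B i ω) ∂P
      = ∑' d : 𝒜 → ℕ, ξ d
          * (∫⁻ s, crPhi p w d s * ψ s ∂(P.map (fun ω k => S k ω)))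
          * ∏ B, (∫⁻ ω, ENNReal.ofReal (z ^ E B 0 ω) ∂P) ^ (d B) := by
  classical
  have hSvec : Measurable (fun ω k => S k ω) := measurable_pi_lambda _ hS
  have hset : ∀ d : 𝒜 → ℕ, MeasurableSet {ω | (fun A => D A ω) = d} := by
    intro d
    have : {ω | (fun A => D A ω) = d} = ⋂ A, (D A) ⁻¹' {d A} := by
      ext ω; simp [funext_iff, Set.mem_iInter]
    rw [this]
    exact MeasurableSet.iInter fun A => (hD A) (measurableSet_singleton _)
  set h : 𝒜 → ℕ → ℝ≥0∞ := fun B n => ENNReal.ofReal (z ^ n) with hh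
  have hhm : ∀ B, Measurable (h B) := fun B => measurable_from_top
  set F : (𝒜 → ℕ) → Ω → ℝ≥0∞ := fun d ω =>
    ξ d * (({ω' | (fun A => D A ω') = d}.indicator (fun ω' => ψ (fun k => S k ω')) ω)
      * ∏ B, ∏ i ∈ Finset.range (d B), h B (E B i ω)) with hF
  have hpt : ∀ ω, ξ (fun A => D A ω) * ψ (fun k => S k ω)
      * ∏ B, ∏ i ∈ Finset.range (D B ω), ENNReal.ofReal (z ^ E B i ω)
      = ∑' d : 𝒜 → ℕ, F d ω := by
    intro ω
    rw [tsum_eq_single (fun A => D A ω) ?_]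
    · have hmem : ω ∈ {ω' | (fun A => D A ω') = (fun A => D A ω)} := rfl
      rw [hF]
      dsimp only
      rw [Set.indicator_of_mem hmem, ← mul_assoc]
    · intro d hd
      have hmem : ω ∉ {ω' | (fun A => D A ω') = d} := fun hc => absurd hc.symm hd
      rw [hF]
      dsimp only
      rw [Set.indicator_of_notMem hmem, zero_mul, mul_zero]
  have hFmeas : ∀ d, Measurable (F d) := by
    intro d
    apply Measurable.const_mul
    apply Measurable.mul
    · exact (hψ.comp hSvec).indicator (hset d)
    · exact Finset.measurable_prod _ fun B _ =>
        Finset.measurable_prod _ fun i _ => (hhm B).comp (hE B i)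
  rw [lintegral_congr hpt, lintegral_tsum (fun d => (hFmeas d).aemeasurable)]
  refine tsum_congr fun d => ?_
  rw [hF]
  dsimp only
  rw [lintegral_const_mul' _ _ (hξ d)]
  rw [cr_indep_factor hS hD hE hid hindep ψ hψ h hhm d]
  have hcint : ∫⁻ ω, ({ω' | (fun A => D A ω') = d}.indicator
        (fun ω' => ψ (fun k => S k ω')) ω) ∂P
      = ∫⁻ s, crPhi p w d s * ψ s ∂(P.map (fun ω k => S k ω)) := by
    rw [lintegral_indicator (hset d)]
    have h1 : ∫⁻ ω in {ω' | (fun A => D A ω') = d}, ψ (fun k => S k ω) ∂P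
        = ∫⁻ s, ψ s ∂(Measure.map (fun ω k => S k ω)
            (P.restrict {ω' | (fun A => D A ω') = d})) :=
      (lintegral_map hψ hSvec).symm
    rw [h1, cr_cond_measure hS hD hcond d,
      lintegral_withDensity_eq_lintegral_mul _ (measurable_crPhi p w d) hψ]
    rfl
  rw [hcint, mul_assoc]

lemma poisson_shift (m : ℕ) (r : ℝ≥0) :
    ((m + 1 : ℕ) : ℝ≥0∞) * ENNReal.ofReal (poissonPMFReal r (m + 1))
      = (r : ℝ≥0∞) * ENNReal.ofReal (poissonPMFReal r m) := by
  have hreal : ((m + 1 : ℕ) : ℝ) * poissonPMFReal r (m + 1) = (r : ℝ) * poissonPMFReal r m := by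
    unfold poissonPMFReal
    rw [pow_succ, Nat.factorial_succ]
    have h1 : ((m + 1 : ℕ) : ℝ) ≠ 0 := by positivity
    have h2 : ((m.factorial : ℕ) : ℝ) ≠ 0 := by positivity
    push_cast
    field_simp
  calc ((m + 1 : ℕ) : ℝ≥0∞) * ENNReal.ofReal (poissonPMFReal r (m + 1))
      = ENNReal.ofReal (((m + 1 : ℕ) : ℝ) * poissonPMFReal r (m + 1)) := by
        rw [ENNReal.ofReal_mul (by positivity), ENNReal.ofReal_natCast]
    _ = ENNReal.ofReal ((r : ℝ) * poissonPMFReal r m) := by rw [hreal]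
    _ = (r : ℝ≥0∞) * ENNReal.ofReal (poissonPMFReal r m) := by
        rw [ENNReal.ofReal_mul r.coe_nonneg, ENNReal.ofReal_coe_nnreal]

lemma crPhi_shift {𝒜 : Type} [Fintype 𝒜] [DecidableEq 𝒜] {N : ℕ}
    (p : 𝒜 → ℝ) (w : 𝒜 → Fin (N + 1) → ℝ) (A : 𝒜) (d : 𝒜 → ℕ) (s : Fin (N + 1) → ℝ) :
    ((d A + 1 : ℕ) : ℝ≥0∞) * crPhi p w (Function.update d A (d A + 1)) s
      = ENNReal.ofReal (p A * ∑ k, w A k * s k) * crPhi p w d s := by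
  unfold crPhi
  rw [← Finset.mul_prod_erase Finset.univ _ (Finset.mem_univ A),
    ← Finset.mul_prod_erase Finset.univ
      (fun B => ENNReal.ofReal (poissonPMFReal (p B * ∑ k, w B k * s k).toNNReal (d B)))
      (Finset.mem_univ A)]
  have hoff : ∀ B ∈ Finset.univ.erase A,
      ENNReal.ofReal (poissonPMFReal (p B * ∑ k, w B k * s k).toNNReal
        (Function.update d A (d A + 1) B))
      = ENNReal.ofReal (poissonPMFReal (p B * ∑ k, w B k * s k).toNNReal (d B)) := by
    intro B hB
    rw [Function.update_of_ne (Finset.mem_erase.mp hB).1]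
  rw [Finset.prod_congr rfl hoff, Function.update_self, ← mul_assoc, ← mul_assoc]
  congr 1
  exact poisson_shift (d A) (p A * ∑ k, w A k * s k).toNNReal

lemma cr_reindex {𝒜 : Type} [Fintype 𝒜] {N : ℕ}
    (p : 𝒜 → ℝ) (w : 𝒜 → Fin (N + 1) → ℝ) (μS : Measure (Fin (N + 1) → ℝ))
    (c : 𝒜 → ℝ≥0∞) (A : 𝒜) :
    ∑' d : 𝒜 → ℕ, ((d A : ℕ) : ℝ≥0∞)
        * (∫⁻ s, crPhi p w d s * (fun _ => (1 : ℝ≥0∞)) s ∂μS) * ∏ B, c B ^ d B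
      = (∑' d : 𝒜 → ℕ, 1
          * (∫⁻ s, crPhi p w d s
              * (fun s => ENNReal.ofReal (p A * ∑ k, w A k * s k)) s ∂μS)
          * ∏ B, c B ^ d B) * c A := by
  classical
  set F : (𝒜 → ℕ) → ℝ≥0∞ := fun d =>
    ((d A : ℕ) : ℝ≥0∞) * (∫⁻ s, crPhi p w d s * (fun _ => (1 : ℝ≥0∞)) s ∂μS)
      * ∏ B, c B ^ d B with hF
  set e : (𝒜 → ℕ) → (𝒜 → ℕ) := fun d => Function.update d A (d A + 1) with he
  have hinj : Function.Injective e := by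
    intro a b hab
    funext B
    by_cases hB : B = A
    · subst hB
      have := congrFun hab B
      rw [he] at this
      simp only [Function.update_self] at this
      omega
    · have := congrFun hab B
      rw [he] at this
      simp only [Function.update_of_ne hB] at this
      exact this
  have hsupp : Function.support F ⊆ Set.range e := by
    intro d hd
    rcases Nat.eq_zero_or_pos (d A) with h0 | hpos
    · exfalso
      apply hd
      rw [hF]
      simp [h0]
    · refine ⟨Function.update d A (d A - 1), ?_⟩
      rw [he]
      simp only [Function.update_idem, Function.update_self]
      rw [Nat.sub_add_cancel hpos, Function.update_eq_self]
  rw [← hinj.tsum_eq hsupp, ← ENNReal.tsum_mul_right]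
  refine tsum_congr fun d => ?_
  rw [hF]
  simp only [mul_one, one_mul]
  have heA : e d A = d A + 1 := Function.update_self A (d A + 1) d
  have hgd : ∏ B, c B ^ e d B = c A * ∏ B, c B ^ d B := by
    rw [← Finset.mul_prod_erase Finset.univ (fun B => c B ^ e d B) (Finset.mem_univ A),
      ← Finset.mul_prod_erase Finset.univ (fun B => c B ^ d B) (Finset.mem_univ A)]
    have hoff : ∀ B ∈ Finset.univ.erase A, c B ^ e d B = c B ^ d B := by
      intro B hB
      rw [he]
      simp only [Function.update_of_ne (Finset.mem_erase.mp hB).1]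
    rw [Finset.prod_congr rfl hoff, heA, pow_succ, ← mul_assoc]
    ring
  have hint : ((e d A : ℕ) : ℝ≥0∞) * (∫⁻ s, crPhi p w (e d) s ∂μS)
      = ∫⁻ s, crPhi p w d s * ENNReal.ofReal (p A * ∑ k, w A k * s k) ∂μS := by
    rw [← lintegral_const_mul' _ _ (ENNReal.natCast_ne_top _)]
    refine lintegral_congr fun s => ?_
    rw [heA, he, crPhi_shift p w A d s, mul_comm]
  calc ((e d A : ℕ) : ℝ≥0∞) * (∫⁻ s, crPhi p w (e d) s ∂μS) * ∏ B, c B ^ e d B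
      = (∫⁻ s, crPhi p w d s * ENNReal.ofReal (p A * ∑ k, w A k * s k) ∂μS)
          * (c A * ∏ B, c B ^ d B) := by rw [hint, hgd]
    _ = (∫⁻ s, crPhi p w d s * ENNReal.ofReal (p A * ∑ k, w A k * s k) ∂μS)
          * (∏ B, c B ^ d B) * c A := by ring


/-- For an obligor `A` and `z ∈ [0,1]`: `𝔼[D_A z^X] = 𝔼[p_A^S z^X] * H_A(z)`. -/
theorem default_pgf_factorization
    {Ω : Type} {𝒜 : Type} [MeasurableSpace Ω] [Fintype 𝒜] {N : ℕ} (hN : 1 ≤ N)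
    (P : Measure Ω) (S : Fin (N + 1) → Ω → ℝ) (D : 𝒜 → Ω → ℕ) (E : 𝒜 → ℕ → Ω → ℕ)
    (p : 𝒜 → ℝ) (w : 𝒜 → Fin (N + 1) → ℝ) (α : Fin N → ℝ)
    (hα : ∀ k, 0 < α k) (hp : ∀ A, 0 ≤ p A)
    (hw0 : ∀ A k, 0 ≤ w A k) (hw1 : ∀ A k, w A k ≤ 1)
    (hwsum : ∀ A, ∑ k, w A k = 1)
    (hM : IsCRModel P S D E p w α α)
    (A : 𝒜) (z : ℝ) (hz : z ∈ Set.Icc (0 : ℝ) 1) :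
    ∫ ω, (D A ω : ℝ) * z ^ portfolioLoss D E ω ∂P
      = (∫ ω, (p A * ∑ k, w A k * S k ω) * z ^ portfolioLoss D E ω ∂P)
        * pgfN P (E A 0) z := by
  classical
  obtain ⟨hprob, hSm, hDm, hEm, hS0, hSindep, hgamma, hcond, hidE, hindep⟩ := hM
  haveI := hprob
  obtain ⟨hz0, hz1⟩ := hz
  have hX : Measurable (portfolioLoss D E) := by
    unfold portfolioLoss
    refine Finset.measurable_sum _ fun B _ => ?_
    have h1 : Measurable (fun q : (ℕ → ℕ) × ℕ => ∑ i ∈ Finset.range q.2, q.1 i) := by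
      apply measurable_from_prod_countable_left
      intro n
      show Measurable fun e : ℕ → ℕ => ∑ i ∈ Finset.range n, e i
      exact Finset.measurable_sum _ fun i _ => measurable_pi_apply i
    exact h1.comp ((measurable_pi_lambda _ (fun i => hEm B i)).prodMk (hDm B))
  have hzXm : Measurable (fun ω => z ^ portfolioLoss D E ω) :=
    (measurable_of_countable (fun n : ℕ => z ^ n)).comp hX
  have hDAr : Measurable (fun ω => (D A ω : ℝ)) :=
    (measurable_of_countable (fun n : ℕ => (n : ℝ))).comp (hDm A)
  have hlamm : Measurable (fun ω => p A * ∑ k, w A k * S k ω) :=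
    (Finset.measurable_sum _ fun k _ => (hSm k).const_mul (w A k)).const_mul (p A)
  have hzE : ∀ ω, ENNReal.ofReal (z ^ portfolioLoss D E ω)
      = ∏ B, ∏ i ∈ Finset.range (D B ω), ENNReal.ofReal (z ^ E B i ω) := by
    intro ω
    unfold portfolioLoss
    rw [← Finset.prod_pow_eq_pow_sum,
      ENNReal.ofReal_prod_of_nonneg (fun _ _ => pow_nonneg hz0 _)]
    refine Finset.prod_congr rfl fun B _ => ?_
    rw [← Finset.prod_pow_eq_pow_sum,
      ENNReal.ofReal_prod_of_nonneg (fun _ _ => pow_nonneg hz0 _)]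
  have haeS : ∀ᵐ ω ∂P, ∀ k, 0 ≤ S k ω := by
    rw [ae_all_iff]
    intro k
    induction k using Fin.cases with
    | zero =>
      filter_upwards with ω
      rw [hS0 ω]
      norm_num
    | succ j =>
      have h0 : P (S j.succ ⁻¹' Set.Iio 0) = 0 := by
        have hmp := Measure.map_apply (μ := P) (hSm j.succ) (measurableSet_Iio (a := (0 : ℝ)))
        rw [hgamma j] at hmp
        rw [← hmp]
        unfold gammaMeasure
        rw [withDensity_apply _ measurableSet_Iio]
        exact lintegral_gammaPDF_of_nonpos le_rfl
      rw [ae_iff]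
      convert h0 using 2
      ext ω
      simp [not_le]
  have hlamae : ∀ᵐ ω ∂P, 0 ≤ p A * ∑ k, w A k * S k ω := by
    filter_upwards [haeS] with ω hω
    exact mul_nonneg (hp A) (Finset.sum_nonneg fun k _ => mul_nonneg (hw0 A k) (hω k))
  have hpgf_nonneg : ∀ B : 𝒜, 0 ≤ pgfN P (E B 0) z :=
    fun B => integral_nonneg fun ω => pow_nonneg hz0 _
  have hpgf_eq : ∀ B : 𝒜, ENNReal.ofReal (pgfN P (E B 0) z)
      = ∫⁻ ω, ENNReal.ofReal (z ^ E B 0 ω) ∂P := by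
    intro B
    unfold pgfN
    refine ofReal_integral_eq_lintegral_ofReal ?_ ?_
    · refine Integrable.mono' (integrable_const (1 : ℝ)) ?_ ?_
      · exact ((measurable_of_countable (fun n : ℕ => z ^ n)).comp
          (hEm B 0)).aestronglyMeasurable
      · filter_upwards with ω
        rw [Real.norm_eq_abs, abs_of_nonneg (pow_nonneg hz0 _)]
        exact pow_le_one₀ hz0 hz1
    · filter_upwards with ω
      exact pow_nonneg hz0 _
  -- convert both Bochner integrals to lintegrals
  have hLHS : ∫ ω, (D A ω : ℝ) * z ^ portfolioLoss D E ω ∂P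
      = (∫⁻ ω, ((D A ω : ℕ) : ℝ≥0∞) * (1 : ℝ≥0∞)
          * ∏ B, ∏ i ∈ Finset.range (D B ω), ENNReal.ofReal (z ^ E B i ω) ∂P).toReal := by
    rw [integral_eq_lintegral_of_nonneg_ae
      (Filter.Eventually.of_forall fun ω =>
        mul_nonneg (Nat.cast_nonneg _) (pow_nonneg hz0 _))
      (hDAr.mul hzXm).aestronglyMeasurable]
    congr 1
    refine lintegral_congr fun ω => ?_
    rw [ENNReal.ofReal_mul (Nat.cast_nonneg _), ENNReal.ofReal_natCast, hzE ω, mul_one]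
  have hRHS : ∫ ω, (p A * ∑ k, w A k * S k ω) * z ^ portfolioLoss D E ω ∂P
      = (∫⁻ ω, (1 : ℝ≥0∞) * ENNReal.ofReal (p A * ∑ k, w A k * S k ω)
          * ∏ B, ∏ i ∈ Finset.range (D B ω), ENNReal.ofReal (z ^ E B i ω) ∂P).toReal := by
    rw [integral_eq_lintegral_of_nonneg_ae
      (f := fun ω => (p A * ∑ k, w A k * S k ω) * z ^ portfolioLoss D E ω)
      (by filter_upwards [hlamae] with ω h; exact mul_nonneg h (pow_nonneg hz0 _))
      (hlamm.mul hzXm).aestronglyMeasurable]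
    congr 1
    refine lintegral_congr fun ω => ?_
    rw [ENNReal.ofReal_mul' (pow_nonneg hz0 _), hzE ω, one_mul]
  have hψm : Measurable (fun s : Fin (N + 1) → ℝ =>
      ENNReal.ofReal (p A * ∑ k, w A k * s k)) :=
    ENNReal.measurable_ofReal.comp
      ((Finset.measurable_sum _ fun k _ => by fun_prop).const_mul
        (p A))
  have hK1 := cr_key (p := p) (w := w) hSm hDm hEm hidE hindep hcond
    (fun _ => (1 : ℝ≥0∞)) measurable_const
    (fun d => ((d A : ℕ) : ℝ≥0∞)) (fun d => ENNReal.natCast_ne_top _) z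
  have hK2 := cr_key (p := p) (w := w) hSm hDm hEm hidE hindep hcond
    (fun s => ENNReal.ofReal (p A * ∑ k, w A k * s k)) hψm
    (fun _ => (1 : ℝ≥0∞)) (fun _ => ENNReal.one_ne_top) z
  have hre := cr_reindex p w (P.map (fun ω k => S k ω))
    (fun B => ∫⁻ ω, ENNReal.ofReal (z ^ E B 0 ω) ∂P) A
  have hfinal : (∫⁻ ω, ((D A ω : ℕ) : ℝ≥0∞) * (1 : ℝ≥0∞)
        * ∏ B, ∏ i ∈ Finset.range (D B ω), ENNReal.ofReal (z ^ E B i ω) ∂P)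
      = (∫⁻ ω, (1 : ℝ≥0∞) * ENNReal.ofReal (p A * ∑ k, w A k * S k ω)
          * ∏ B, ∏ i ∈ Finset.range (D B ω), ENNReal.ofReal (z ^ E B i ω) ∂P)
        * (∫⁻ ω, ENNReal.ofReal (z ^ E A 0 ω) ∂P) := by
    calc (∫⁻ ω, ((D A ω : ℕ) : ℝ≥0∞) * (1 : ℝ≥0∞)
          * ∏ B, ∏ i ∈ Finset.range (D B ω), ENNReal.ofReal (z ^ E B i ω) ∂P)
        = ∑' d : 𝒜 → ℕ, ((d A : ℕ) : ℝ≥0∞)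
            * (∫⁻ s, crPhi p w d s * (fun _ => (1 : ℝ≥0∞)) s ∂(P.map (fun ω k => S k ω)))
            * ∏ B, (∫⁻ ω, ENNReal.ofReal (z ^ E B 0 ω) ∂P) ^ (d B) := hK1
      _ = (∑' d : 𝒜 → ℕ, 1
            * (∫⁻ s, crPhi p w d s
                * (fun s => ENNReal.ofReal (p A * ∑ k, w A k * s k)) s
                ∂(P.map (fun ω k => S k ω)))
            * ∏ B, (∫⁻ ω, ENNReal.ofReal (z ^ E B 0 ω) ∂P) ^ (d B))
          * (∫⁻ ω, ENNReal.ofReal (z ^ E A 0 ω) ∂P) := hre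
      _ = (∫⁻ ω, (1 : ℝ≥0∞) * ENNReal.ofReal (p A * ∑ k, w A k * S k ω)
            * ∏ B, ∏ i ∈ Finset.range (D B ω), ENNReal.ofReal (z ^ E B i ω) ∂P)
          * (∫⁻ ω, ENNReal.ofReal (z ^ E A 0 ω) ∂P) :=
        congrArg (· * (∫⁻ ω, ENNReal.ofReal (z ^ E A 0 ω) ∂P)) hK2.symm
  rw [hLHS, hRHS, hfinal, ENNReal.toReal_mul, ← hpgf_eq A,
    ENNReal.toReal_ofReal (hpgf_nonneg A)]
end

section
/- For every z ∈ [0,1] and every pair of indices: (i) E[S_0² · ∏_{k=0}^N exp(S_k μ_k (Q_k(z) − 1))] = G_X^{(α)}(z); (ii) for j ≥ 1, E[S_0 S_j · ∏_{k=0}^N exp(S_k μ_k (Q_k(z) − 1))] = G_X^{(α+e_j)}(z); (iii) for 1 ≤ i ≠ j ≤ N, E[S_i S_j · ∏_{k=0}^N exp(S_k μ_k (Q_k(z) − 1))] = G_X^{(α+e_i+e_j)}(z); (iv) for j ≥ 1, E[S_j² · ∏_{k=0}^N exp(S_k μ_k (Q_k(z) − 1))] = ((α_j + 1)/α_j) ·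 G_X^{(α+2e_j)}(z). -/
section AuxLemmas
open MeasureTheory ProbabilityTheory Real Finset Set
open scoped ENNReal NNReal

-- product of independent integrable functions
lemma my_integral_prod {Ω ι : Type*} [MeasurableSpace Ω] {μ : Measure Ω}
    [IsProbabilityMeasure μ] {Y : ι → Ω → ℝ}
    (h : iIndepFun Y μ) (hm : ∀ i, Measurable (Y i))
    (hint : ∀ i, Integrable (Y i) μ) (s : Finset ι) :
    Integrable (fun ω => ∏ i ∈ s, Y i ω) μ ∧
      ∫ ω, ∏ i ∈ s, Y i ω ∂μ = ∏ i ∈ s, ∫ ω, Y i ω ∂μ := by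
  classical
  induction s using Finset.induction_on with
  | empty => simp
  | @insert i s hi ih =>
    have hIndep : IndepFun (∏ j ∈ s, Y j) (Y i) μ :=
      h.indepFun_finset_prod_of_notMem hm hi
    have hps : (fun ω => ∏ j ∈ s, Y j ω) = ∏ j ∈ s, Y j := by
      funext ω; simp
    have hintp : Integrable (∏ j ∈ s, Y j) μ := by rw [← hps]; exact ih.1
    constructor
    · have := hIndep.integrable_mul hintp (hint i)
      refine this.congr (ae_of_all _ fun ω => ?_)
      simp [Finset.prod_insert hi, mul_comm]
    · have h1 := hIndep.integral_mul_eq_mul_integral hintp.aestronglyMeasurable (hint i).aestronglyMeasurable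
      have : ∫ ω, ∏ j ∈ insert i s, Y j ω ∂μ
          = ∫ ω, (∏ j ∈ s, Y j) ω * Y i ω ∂μ := by
        refine integral_congr_ae (ae_of_all _ fun ω => ?_)
        simp [Finset.prod_insert hi, mul_comm]
      rw [this]
      have h2 : ∫ ω, (∏ j ∈ s, Y j) ω * Y i ω ∂μ = integral μ ((∏ j ∈ s, Y j) * Y i) := rfl
      rw [h2, h1, Finset.prod_insert hi, ← hps, ih.2, mul_comm]

lemma gamma_aux_onIoi {a r c : ℝ} (ha : 0 < a) (hrc : 0 < r - c) (m : ℕ) (x : ℝ) (hx : x ∈ Ioi (0:ℝ)) :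
    x ^ m * Real.exp (c * x) * gammaPDFReal a r x
      = r ^ a / Real.Gamma a * (x ^ (a + m - 1) * Real.exp (-((r - c) * x))) := by
  have hx0 : (0:ℝ) < x := hx
  rw [gammaPDFReal, if_pos hx0.le]
  have h1 : x ^ m * x ^ (a - 1) = x ^ (a + m - 1) := by
    rw [← Real.rpow_natCast x m, ← Real.rpow_add hx0]; ring_nf
  have h2 : Real.exp (c * x) * Real.exp (-(r * x)) = Real.exp (-((r - c) * x)) := by
    rw [← Real.exp_add]; ring_nf
  calc x ^ m * Real.exp (c * x) * (r ^ a / Real.Gamma a * x ^ (a - 1) * Real.exp (-(r * x)))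
      = r ^ a / Real.Gamma a * ((x ^ m * x ^ (a - 1)) * (Real.exp (c * x) * Real.exp (-(r * x)))) := by
        ring
    _ = _ := by rw [h1, h2]

lemma gamma_aux_integrableOn {a r c : ℝ} (ha : 0 < a) (hrc : 0 < r - c) (m : ℕ) :
    IntegrableOn (fun x : ℝ => x ^ (a + m - 1) * Real.exp (-((r - c) * x))) (Ioi 0) := by
  have h := integrableOn_rpow_mul_exp_neg_mul_rpow (p := 1) (s := a + m - 1) (b := r - c)
    (by have : (0:ℝ) ≤ m := Nat.cast_nonneg m; linarith) one_pos hrc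
  refine h.congr_fun (fun x hx => ?_) measurableSet_Ioi
  simp only [Real.rpow_one]; ring_nf

lemma gamma_aux_integrable_volume {a r c : ℝ} (ha : 0 < a) (hr : 0 < r) (hrc : 0 < r - c) (m : ℕ) :
    Integrable (fun x : ℝ => x ^ m * Real.exp (c * x) * gammaPDFReal a r x) := by
  rw [← integrableOn_univ, ← Set.Iic_union_Ioi (a := (0:ℝ)), integrableOn_union]
  constructor
  · rw [IntegrableOn, Measure.restrict_congr_set Iio_ae_eq_Iic.symm]
    refine (integrableOn_congr_fun (g := fun _ => 0) ?_ measurableSet_Iio).mpr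
      ((integrableOn_const_iff (by simp)).mpr (Or.inl (by simp)))
    intro x hx
    simp [gammaPDFReal, not_le.mpr (Set.mem_Iio.mp hx)]
  · have h1 : IntegrableOn
        (fun x : ℝ => r ^ a / Real.Gamma a * (x ^ (a + m - 1) * Real.exp (-((r - c) * x))))
        (Ioi 0) := (gamma_aux_integrableOn ha hrc m).const_mul _
    exact h1.congr_fun (fun x hx => (gamma_aux_onIoi ha hrc m x hx).symm) measurableSet_Ioi

lemma gamma_integrable {a r c : ℝ} (ha : 0 < a) (hr : 0 < r) (hrc : 0 < r - c) (m : ℕ) :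
    Integrable (fun x : ℝ => x ^ m * Real.exp (c * x)) (gammaMeasure a r) := by
  have hpdf : gammaPDF a r = fun x => ENNReal.ofReal (gammaPDFReal a r x) := rfl
  rw [gammaMeasure, hpdf, integrable_withDensity_iff ((measurable_gammaPDFReal a r).ennreal_ofReal)
    (ae_of_all _ fun x => ENNReal.ofReal_lt_top)]
  refine (gamma_aux_integrable_volume ha hr hrc m).congr (ae_of_all _ fun x => ?_)
  simp only [gammaPDF, ENNReal.toReal_ofReal (gammaPDFReal_nonneg ha hr x)]

lemma gamma_integral {a r c : ℝ} (ha : 0 < a) (hr : 0 < r) (hrc : 0 < r - c) (m : ℕ) :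
    ∫ x, x ^ m * Real.exp (c * x) ∂(gammaMeasure a r)
      = Real.Gamma (a + m) / Real.Gamma a * r ^ a / (r - c) ^ (a + (m:ℝ)) := by
  have hpdf : (gammaPDF a r) = fun x => ((gammaPDFReal a r x).toNNReal : ℝ≥0∞) := rfl
  rw [gammaMeasure, hpdf,
    integral_withDensity_eq_integral_smul ((measurable_gammaPDFReal a r).real_toNNReal) _]
  have hsm : ∀ x : ℝ, (gammaPDFReal a r x).toNNReal • (x ^ m * Real.exp (c * x))
      = x ^ m * Real.exp (c * x) * gammaPDFReal a r x := by
    intro x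
    rw [NNReal.smul_def, Real.coe_toNNReal _ (gammaPDFReal_nonneg ha hr x), smul_eq_mul]
    ring
  simp_rw [hsm]
  rw [← setIntegral_univ, ← Set.Iic_union_Ioi (a := (0:ℝ)),
    setIntegral_union (Set.Iic_disjoint_Ioi le_rfl) measurableSet_Ioi
      ((gamma_aux_integrable_volume ha hr hrc m).integrableOn)
      ((gamma_aux_integrable_volume ha hr hrc m).integrableOn)]
  have hIic : ∫ x in Iic (0:ℝ), x ^ m * Real.exp (c * x) * gammaPDFReal a r x = 0 := by
    rw [setIntegral_congr_set Iio_ae_eq_Iic.symm]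
    rw [setIntegral_congr_fun measurableSet_Iio (g := fun _ => 0)
      (fun x hx => by rw [gammaPDFReal, if_neg (not_le.mpr hx), mul_zero])]
    simp
  have ham : 0 < a + (m:ℝ) := by have : (0:ℝ) ≤ m := Nat.cast_nonneg m; linarith
  rw [hIic, zero_add,
    setIntegral_congr_fun measurableSet_Ioi (gamma_aux_onIoi ha hrc m),
    integral_const_mul, show a + (m:ℝ) - 1 = (a + m) - 1 by norm_num,
    integral_rpow_mul_exp_neg_mul_Ioi ham hrc]
  have hG : Real.Gamma a ≠ 0 := (Real.Gamma_pos_of_pos ha).ne'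
  have hrc' : ((r - c) ^ (a + (m:ℝ))) ≠ 0 := (Real.rpow_pos_of_pos hrc _).ne'
  rw [Real.div_rpow zero_le_one hrc.le, Real.one_rpow]
  field_simp

lemma key_moment {Ω : Type} [MeasurableSpace Ω] (P : Measure Ω) [IsProbabilityMeasure P]
    {N : ℕ} (S : Fin (N + 1) → Ω → ℝ) (measS : ∀ k, Measurable (S k))
    (hS0 : ∀ ω, S 0 ω = 1) (hSind : iIndepFun S P)
    (α : Fin N → ℝ) (hα : ∀ k, 0 < α k)
    (hgamma : ∀ k : Fin N, P.map (S k.succ) = gammaMeasure (α k) (α k))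
    (c : Fin (N + 1) → ℝ) (hc : ∀ k, c k ≤ 0) (m : Fin (N + 1) → ℕ) :
    ∫ ω, ∏ k, (S k ω) ^ (m k) * Real.exp (c k * S k ω) ∂P
      = Real.exp (c 0) * ∏ k : Fin N,
          (Real.Gamma (α k + m k.succ) / Real.Gamma (α k) * (α k) ^ (α k)
            / (α k - c k.succ) ^ (α k + (m k.succ : ℝ))) := by
  have hfm : ∀ k : Fin (N + 1), Measurable (fun x : ℝ => x ^ (m k) * Real.exp (c k * x)) :=
    fun k => (measurable_id.pow_const _).mul ((measurable_id.const_mul _).exp)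
  have hY : iIndepFun
      (fun k ω => (S k ω) ^ (m k) * Real.exp (c k * S k ω)) P :=
    hSind.comp (fun k x => x ^ (m k) * Real.exp (c k * x)) hfm
  have hrc : ∀ k : Fin N, 0 < α k - c k.succ := fun k => by
    have h1 := hc k.succ; have h2 := hα k; linarith
  have hint : ∀ k : Fin (N + 1),
      Integrable (fun ω => (S k ω) ^ (m k) * Real.exp (c k * S k ω)) P := by
    intro k
    induction k using Fin.cases with
    | zero =>
      have h0 : (fun ω => (S 0 ω) ^ (m 0) * Real.exp (c 0 * S 0 ω))
          = fun _ => Real.exp (c 0) := by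
        funext ω; rw [hS0 ω]; simp
      rw [h0]; exact integrable_const _
    | succ k =>
      have h1 := gamma_integrable (hα k) (hα k) (hrc k) (m k.succ)
      rw [← hgamma k] at h1
      exact (integrable_map_measure (hfm k.succ).aestronglyMeasurable
        (measS k.succ).aemeasurable).mp h1
  have hprod := my_integral_prod hY (fun k => (hfm k).comp (measS k)) hint Finset.univ
  rw [hprod.2, Fin.prod_univ_succ]
  congr 1
  · have h0 : (fun ω => (S 0 ω) ^ (m 0) * Real.exp (c 0 * S 0 ω))
        = fun _ => Real.exp (c 0) := by
      funext ω; rw [hS0 ω]; simp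
    rw [h0]; simp
  · refine Finset.prod_congr rfl fun k _ => ?_
    have h1 : ∫ ω, (S k.succ ω) ^ (m k.succ) * Real.exp (c k.succ * S k.succ ω) ∂P
        = ∫ x, x ^ (m k.succ) * Real.exp (c k.succ * x) ∂(P.map (S k.succ)) :=
      (integral_map (measS k.succ).aemeasurable (hfm k.succ).aestronglyMeasurable).symm
    rw [h1, hgamma k, gamma_integral (hα k) (hα k) (hrc k) (m k.succ)]

lemma hfac_lemma {a μ q : ℝ} (ha : 0 < a) (hμ : 0 < μ) (hq0 : 0 ≤ q) (hq1 : q ≤ 1) (n : ℕ) :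
    Real.Gamma (a + n) / Real.Gamma a * a ^ a / (a - μ * (q - 1)) ^ (a + (n : ℝ))
      = (Real.Gamma (a + n) / (Real.Gamma a * a ^ n)) *
        ((1 - μ / (μ + a)) / (1 - μ / (μ + a) * q)) ^ (a + (n : ℝ)) := by
  have hμa : 0 < μ + a := by linarith
  have hac : 0 < a - μ * (q - 1) := by nlinarith
  have hratio : (1 - μ / (μ + a)) / (1 - μ / (μ + a) * q) = a / (a - μ * (q - 1)) := by
    have h1 : 1 - μ / (μ + a) = a / (μ + a) := by field_simp; ring
    have h2 : 1 - μ / (μ + a) * q = (a - μ * (q - 1)) / (μ + a) := by field_simp; ring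
    rw [h1, h2]; field_simp
  rw [hratio, Real.div_rpow ha.le hac.le, Real.rpow_add ha, Real.rpow_natCast]
  have hG : Real.Gamma a ≠ 0 := (Real.Gamma_pos_of_pos ha).ne'
  have han : (a : ℝ) ^ n ≠ 0 := pow_ne_zero n ha.ne'
  have hacp : ((a - μ * (q - 1)) ^ (a + (n : ℝ))) ≠ 0 := (Real.rpow_pos_of_pos hac _).ne'
  field_simp

lemma coeff_zero {a : ℝ} (ha : 0 < a) :
    Real.Gamma (a + ((0 : ℕ) : ℝ)) / (Real.Gamma a * a ^ (0 : ℕ)) = 1 := by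
  have hG : Real.Gamma a ≠ 0 := (Real.Gamma_pos_of_pos ha).ne'
  simp [hG]

lemma coeff_one {a : ℝ} (ha : 0 < a) :
    Real.Gamma (a + ((1 : ℕ) : ℝ)) / (Real.Gamma a * a ^ (1 : ℕ)) = 1 := by
  have hG : Real.Gamma a ≠ 0 := (Real.Gamma_pos_of_pos ha).ne'
  rw [show a + ((1:ℕ):ℝ) = a + 1 by push_cast; ring, Real.Gamma_add_one ha.ne']
  field_simp

lemma coeff_two {a : ℝ} (ha : 0 < a) :
    Real.Gamma (a + ((2 : ℕ) : ℝ)) / (Real.Gamma a * a ^ (2 : ℕ)) = (a + 1) / a := by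
  have hG : Real.Gamma a ≠ 0 := (Real.Gamma_pos_of_pos ha).ne'
  have h2 : a + ((2:ℕ):ℝ) = (a + 1) + 1 := by push_cast; ring
  rw [h2, Real.Gamma_add_one (by linarith), Real.Gamma_add_one ha.ne']
  field_simp


end AuxLemmas

open MeasureTheory ProbabilityTheory Real Finset

/-- The stressed generating function
`G_X^(β)(z) = exp (μ₀ (Q₀ z - 1)) * ∏ k, ((1 - δ_k)/(1 - δ_k Q_k z)) ^ β_k`, where
`δ_k = μ_k/(μ_k + α_k)`. -/
noncomputable def Gstress {N : ℕ} (α β : Fin N → ℝ) (μk : Fin (N + 1) → ℝ)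
    (Q : Fin (N + 1) → ℝ → ℝ) (z : ℝ) : ℝ :=
  Real.exp (μk 0 * (Q 0 z - 1))
    * ∏ k : Fin N,
        ((1 - μk k.succ / (μk k.succ + α k))
          / (1 - μk k.succ / (μk k.succ + α k) * Q k.succ z)) ^ (β k)

/-- The mixed second moments of the Gamma factors against
`∏ k, exp (S_k μ_k (Q_k z - 1))` produce the stressed generating functions:
`𝔼[S₀² ∏ₖ ...] = G_X^(α)(z)`, `𝔼[S₀ S_j ∏ₖ ...] = G_X^(α+e_j)(z)`,
`𝔼[S_i S_j ∏ₖ ...] = G_X^(α+e_i+e_j)(z)` for `i ≠ j`, and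
`𝔼[S_j² ∏ₖ ...] = ((α_j+1)/α_j) G_X^(α+2e_j)(z)`. -/
theorem factor_moments_stressed_pgf
    {Ω : Type} [MeasurableSpace Ω] (P : Measure Ω) [IsProbabilityMeasure P]
    {N : ℕ} (hN : 1 ≤ N) (S : Fin (N + 1) → Ω → ℝ)
    (measS : ∀ k, Measurable (S k)) (hS0 : ∀ ω, S 0 ω = 1)
    (hSind : iIndepFun S P)
    (α : Fin N → ℝ) (hα : ∀ k, 0 < α k)
    (hgamma : ∀ k : Fin N, P.map (S k.succ) = gammaMeasure (α k) (α k))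
    (μk : Fin (N + 1) → ℝ) (hμ : ∀ k, 0 < μk k)
    (Q : Fin (N + 1) → ℝ → ℝ)
    (hQ : ∀ k z, z ∈ Set.Icc (0 : ℝ) 1 → Q k z ∈ Set.Icc (0 : ℝ) 1)
    (z : ℝ) (hz : z ∈ Set.Icc (0 : ℝ) 1) :
    (∫ ω, S 0 ω ^ 2 * ∏ k : Fin (N + 1), Real.exp (S k ω * μk k * (Q k z - 1)) ∂P
        = Gstress α α μk Q z)
    ∧ (∀ j : Fin N,
        ∫ ω, S 0 ω * S j.succ ω
            * ∏ k : Fin (N + 1), Real.exp (S k ω * μk k * (Q k z - 1)) ∂P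
          = Gstress α (α + unitVec j) μk Q z)
    ∧ (∀ i j : Fin N, i ≠ j →
        ∫ ω, S i.succ ω * S j.succ ω
            * ∏ k : Fin (N + 1), Real.exp (S k ω * μk k * (Q k z - 1)) ∂P
          = Gstress α (α + unitVec i + unitVec j) μk Q z)
    ∧ (∀ j : Fin N,
        ∫ ω, S j.succ ω ^ 2
            * ∏ k : Fin (N + 1), Real.exp (S k ω * μk k * (Q k z - 1)) ∂P
          = ((α j + 1) / α j) * Gstress α (α + 2 • unitVec j) μk Q z) := by

  have hc : ∀ k, μk k * (Q k z - 1) ≤ 0 := fun k => by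
    nlinarith [(hμ k).le, (hQ k z hz).2, (hQ k z hz).1]
  have main : ∀ m : Fin (N + 1) → ℕ,
      ∫ ω, ∏ k, (S k ω) ^ (m k) * Real.exp ((μk k * (Q k z - 1)) * S k ω) ∂P
        = Real.exp (μk 0 * (Q 0 z - 1)) * ∏ k : Fin N,
            (Real.Gamma (α k + (m k.succ : ℝ)) / (Real.Gamma (α k) * (α k) ^ (m k.succ)))
              * (((1 - μk k.succ / (μk k.succ + α k))
                  / (1 - μk k.succ / (μk k.succ + α k) * Q k.succ z))
                    ^ (α k + (m k.succ : ℝ))) := by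
    intro m
    rw [key_moment P S measS hS0 hSind α hα hgamma _ hc m]
    congr 1
    refine Finset.prod_congr rfl fun k _ => ?_
    exact hfac_lemma (hα k) (hμ k.succ) (hQ k.succ z hz).1 (hQ k.succ z hz).2 (m k.succ)
  refine ⟨?_, ?_, ?_, ?_⟩
  · -- S 0 ^ 2
    have h1 : ∫ ω, S 0 ω ^ 2 * ∏ k, Real.exp (S k ω * μk k * (Q k z - 1)) ∂P
        = ∫ ω, ∏ k, (S k ω) ^ (if k = 0 then 2 else 0)
            * Real.exp ((μk k * (Q k z - 1)) * S k ω) ∂P := by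
      refine integral_congr_ae (ae_of_all _ fun ω => ?_)
      dsimp only
      rw [Finset.prod_mul_distrib]
      congr 1
      · rw [Fin.prod_univ_succ]
        simp [Fin.succ_ne_zero]
      · exact Finset.prod_congr rfl fun k _ => congrArg Real.exp (by ring)
    rw [h1, main (fun k => if k = 0 then 2 else 0)]
    simp only [Gstress]
    congr 1
    refine Finset.prod_congr rfl fun k _ => ?_
    rw [if_neg (Fin.succ_ne_zero k), coeff_zero (hα k), one_mul]
    norm_num
  · -- S 0 * S j
    intro j
    have h1 : ∫ ω, S 0 ω * S j.succ ω * ∏ k, Real.exp (S k ω * μk k * (Q k z - 1)) ∂P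
        = ∫ ω, ∏ k, (S k ω) ^ (if k = j.succ then 1 else 0)
            * Real.exp ((μk k * (Q k z - 1)) * S k ω) ∂P := by
      refine integral_congr_ae (ae_of_all _ fun ω => ?_)
      dsimp only
      rw [Finset.prod_mul_distrib]
      congr 1
      · rw [Fin.prod_univ_succ, if_neg (Fin.succ_ne_zero j).symm, pow_zero, hS0 ω]
        simp [Fin.succ_inj, pow_ite]
      · exact Finset.prod_congr rfl fun k _ => congrArg Real.exp (by ring)
    rw [h1, main (fun k => if k = j.succ then 1 else 0)]
    simp only [Gstress]
    congr 1
    refine Finset.prod_congr rfl fun k _ => ?_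
    have hexp : (α + unitVec j) k = α k + (if k = j then (1:ℝ) else 0) := by
      simp [unitVec]
    by_cases hkj : k = j
    · subst hkj
      rw [if_pos rfl, coeff_one (hα k), one_mul, hexp, if_pos rfl]
      norm_num
    · rw [if_neg (fun h => hkj (Fin.succ_inj.mp h)), coeff_zero (hα k), one_mul, hexp,
        if_neg hkj]
      norm_num
  · -- S i * S j, i ≠ j
    intro i j hij
    have h1 : ∫ ω, S i.succ ω * S j.succ ω * ∏ k, Real.exp (S k ω * μk k * (Q k z - 1)) ∂P
        = ∫ ω, ∏ k, (S k ω) ^ ((if k = i.succ then 1 else 0) + (if k = j.succ then 1 else 0))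
            * Real.exp ((μk k * (Q k z - 1)) * S k ω) ∂P := by
      refine integral_congr_ae (ae_of_all _ fun ω => ?_)
      dsimp only
      rw [Finset.prod_mul_distrib]
      congr 1
      · simp only [pow_add, Finset.prod_mul_distrib]
        congr 1
        · rw [Fin.prod_univ_succ, if_neg (Fin.succ_ne_zero i).symm, pow_zero, one_mul]
          simp [Fin.succ_inj, pow_ite]
        · rw [Fin.prod_univ_succ, if_neg (Fin.succ_ne_zero j).symm, pow_zero, one_mul]
          simp [Fin.succ_inj, pow_ite]
      · exact Finset.prod_congr rfl fun k _ => congrArg Real.exp (by ring)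
    rw [h1, main (fun k => (if k = i.succ then 1 else 0) + (if k = j.succ then 1 else 0))]
    simp only [Gstress]
    congr 1
    refine Finset.prod_congr rfl fun k _ => ?_
    have hexp : (α + unitVec i + unitVec j) k
        = α k + ((if k = i then (1:ℝ) else 0) + (if k = j then (1:ℝ) else 0)) := by
      simp [unitVec]; ring
    by_cases hki : k = i
    · subst hki
      rw [if_pos rfl, if_neg (fun h => hij (Fin.succ_inj.mp h)), coeff_one (hα k), one_mul,
        hexp, if_pos rfl, if_neg hij]
      norm_num
    · by_cases hkj : k = j
      · subst hkj
        rw [if_neg (fun h => hki (Fin.succ_inj.mp h)), if_pos rfl, coeff_one (hα k), one_mul,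
          hexp, if_neg hki, if_pos rfl]
        norm_num
      · rw [if_neg (fun h => hki (Fin.succ_inj.mp h)),
          if_neg (fun h => hkj (Fin.succ_inj.mp h)), coeff_zero (hα k), one_mul, hexp,
          if_neg hki, if_neg hkj]
        norm_num
  · -- S j ^ 2
    intro j
    have h1 : ∫ ω, S j.succ ω ^ 2 * ∏ k, Real.exp (S k ω * μk k * (Q k z - 1)) ∂P
        = ∫ ω, ∏ k, (S k ω) ^ (if k = j.succ then 2 else 0)
            * Real.exp ((μk k * (Q k z - 1)) * S k ω) ∂P := by
      refine integral_congr_ae (ae_of_all _ fun ω => ?_)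
      dsimp only
      rw [Finset.prod_mul_distrib]
      congr 1
      · rw [Fin.prod_univ_succ, if_neg (Fin.succ_ne_zero j).symm, pow_zero, one_mul]
        simp [Fin.succ_inj, pow_ite]
      · exact Finset.prod_congr rfl fun k _ => congrArg Real.exp (by ring)
    rw [h1, main (fun k => if k = j.succ then 2 else 0)]
    simp only [Gstress]
    have hterm : ∀ k : Fin N,
        (Real.Gamma (α k + ((if k.succ = j.succ then 2 else 0 : ℕ) : ℝ))
            / (Real.Gamma (α k) * (α k) ^ (if k.succ = j.succ then 2 else 0 : ℕ)))
          * (((1 - μk k.succ / (μk k.succ + α k))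
              / (1 - μk k.succ / (μk k.succ + α k) * Q k.succ z))
                ^ (α k + ((if k.succ = j.succ then 2 else 0 : ℕ) : ℝ)))
        = (if k = j then (α j + 1) / α j else 1)
            * (((1 - μk k.succ / (μk k.succ + α k))
              / (1 - μk k.succ / (μk k.succ + α k) * Q k.succ z))
                ^ ((α + 2 • unitVec j) k)) := by
      intro k
      have hexp : (α + 2 • unitVec j) k = α k + 2 * (if k = j then (1:ℝ) else 0) := by
        simp [unitVec]
      by_cases hkj : k = j
      · subst hkj
        rw [if_pos rfl, coeff_two (hα k), if_pos rfl, hexp, if_pos rfl]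
        norm_num
      · rw [if_neg (fun h => hkj (Fin.succ_inj.mp h)), coeff_zero (hα k), if_neg hkj,
          one_mul, one_mul, hexp, if_neg hkj]
        norm_num
    rw [Finset.prod_congr rfl fun k _ => hterm k, Finset.prod_mul_distrib,
      Finset.prod_ite_eq' Finset.univ j (fun _ => (α j + 1) / α j)]
    simp only [Finset.mem_univ, if_pos]
    ring
end
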